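/- arXiv:1507.05350 — 8 statements merged into one kernel-verified Lean document; each statement's English description precedes it below -/
import Mathlib

section
/- Let θ be a proper convex piecewise linear function on ℝ^m, z̄ ∈ dom θ, and v̄ ∈ ∂θ(z̄). Then the singular subdifferential of θ at z̄, which for the convex function θ equals the convex normal cone {v ∈ ℝ^m : ⟨v, z − z̄⟩ ≤ 0 for all z ∈ dom θ} = cone{d_i : i ∈ I(z̄)}, is contained in ∂²θ(z̄,v̄)(0). Consequently, if ∂²θ(z̄,v̄)(0) ∩ ker ∇_xΦ(x̄,w̄)* = {0} for a C²-smooth mapping Φ : ℝ^n × ℝ^d → ℝ^m with Φ(x̄,w̄) = z̄, then also the first-order qualification condition {v : ⟨v, z − z̄⟩ ≤ 0 for all z ∈ dom θ} ∩ ker ∇_xΦ(x̄,w̄)* = {0} holds. -/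
noncomputable section
open Set Filter Topology Metric
open scoped RealInnerProductSpace Pointwise NNReal Classical

/-- `Euc m` is the Euclidean space `ℝ^m`. -/
abbrev Euc (m : ℕ) := EuclideanSpace ℝ (Fin m)

variable {F G : Type*} [NormedAddCommGroup F] [InnerProductSpace ℝ F]
  [NormedAddCommGroup G] [InnerProductSpace ℝ G]

/-- The (convex) subdifferential of an extended-real-valued function:
`∂θ(z) = {v : θ(z') ≥ θ(z) + ⟨v, z' - z⟩ for all z'}`. -/
def subdiff (θ : F → EReal) (z : F) : Set F :=
  {v | ∀ z', θ z + ((⟪v, z' - z⟫ : ℝ) : EReal) ≤ θ z'}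

/-- The Fréchet (regular) normal cone to `Ω` at `x`:
vectors `v` with `limsup_{y → x, y ∈ Ω} ⟨v, y - x⟩ / ‖y - x‖ ≤ 0`. -/
def frechetNormal (Ω : Set F) (x : F) : Set F :=
  {v | Filter.limsup (fun y => ⟪v, y - x⟫ / ‖y - x‖) (𝓝[Ω] x) ≤ 0}

/-- The limiting (Mordukhovich) normal cone to `Ω` at `x`. -/
def limitingNormal (Ω : Set F) (x : F) : Set F :=
  {v | ∃ xs vs : ℕ → F, (∀ k, xs k ∈ Ω) ∧ Filter.Tendsto xs Filter.atTop (𝓝 x) ∧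
    Filter.Tendsto vs Filter.atTop (𝓝 v) ∧ ∀ k, vs k ∈ frechetNormal Ω (xs k)}

/-- Pairing into the `ℓ²`-product of two inner product spaces. -/
def pl2 (x : F) (y : G) : WithLp 2 (F × G) := (WithLp.equiv 2 (F × G)).symm (x, y)

/-- The second-order subdifferential (generalized Hessian)
`∂²θ(z,v)(u) = {w : (w,-u) ∈ N((z,v); gph ∂θ)}`. -/
def sosd (θ : F → EReal) (z v : F) (u : F) : Set F :=
  {w | pl2 w (-u) ∈ limitingNormal
    {q : WithLp 2 (F × F) | ((WithLp.equiv 2 (F × F)) q).2 ∈ subdiff θ ((WithLp.equiv 2 (F × F)) q).1}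
    (pl2 z v)}

/-- The polyhedral domain `{z : ⟨d i, z⟩ ≤ β i for all i}` of a CPWL function. -/
def cpwlDom {m p : ℕ} (d : Fin p → Euc m) (β : Fin p → ℝ) : Set (Euc m) :=
  {z | ∀ i, ⟪d i, z⟫ ≤ β i}

/-- The CPWL function determined by the data `(a, α, d, β)`:
`θ(z) = max_i (⟨a i, z⟩ - α i)` on its polyhedral domain and `+∞` outside. -/
def cpwlFun {m l p : ℕ} (a : Fin l → Euc m) (α : Fin l → ℝ) (d : Fin p → Euc m)
    (β : Fin p → ℝ) : Euc m → EReal :=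
  fun z => if z ∈ cpwlDom d β then (((⨆ i, (⟪a i, z⟫ - α i)) : ℝ) : EReal) else ⊤

/-- Active indices of the max expression at `z`. -/
def Kact {m l p : ℕ} (a : Fin l → Euc m) (α : Fin l → ℝ) (d : Fin p → Euc m) (β : Fin p → ℝ)
    (z : Euc m) : Set (Fin l) :=
  {i | cpwlFun a α d β z = ((⟪a i, z⟫ - α i : ℝ) : EReal)}

/-- Active indices of the domain inequalities at `z`. -/
def Iact {m p : ℕ} (d : Fin p → Euc m) (β : Fin p → ℝ) (z : Euc m) : Set (Fin p) :=
  {i | ⟪d i, z⟫ = β i}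

/-- Convex conic hull: all finite nonnegative combinations of elements of `s`. -/
def coneHull (s : Set F) : Set F :=
  {x | ∃ (n : ℕ) (c : Fin n → ℝ) (y : Fin n → F), (∀ i, 0 ≤ c i) ∧ (∀ i, y i ∈ s) ∧
    x = ∑ i, c i • y i}

/-- `Spar θ z` is the linear subspace parallel to the affine hull of `∂θ(z)`. -/
def Spar (θ : F → EReal) (z : F) : Submodule ℝ F := (affineSpan ℝ (subdiff θ z)).direction

/-- A convex polyhedron: a finite intersection of closed halfspaces. -/
def IsPolyhedron {V : Type*} [AddCommGroup V] [Module ℝ V] (C : Set V) : Prop :=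
  ∃ (N : ℕ) (f : Fin N → V →ₗ[ℝ] ℝ) (b : Fin N → ℝ), C = {x | ∀ i, f i x ≤ b i}

/-- A proper convex piecewise linear function with values in `ℝ ∪ {+∞}`:
its epigraph is a convex polyhedron, it never takes the value `-∞`, and it is
not identically `+∞`. -/
def IsCPWL {V : Type*} [AddCommGroup V] [Module ℝ V] (f : V → EReal) : Prop :=
  IsPolyhedron {xt : V × ℝ | f xt.1 ≤ (xt.2 : EReal)} ∧ (∀ x, f x ≠ ⊥) ∧ (∃ x, f x ≠ ⊤)

/-- Local argmin set `M_γ(w,v)` of `x ↦ φ(x,w) - ⟨v,x⟩` over the ball `‖x - xb‖ ≤ γ`,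
with the convention that minimizers at which the objective is `+∞` are discarded. -/
def argminLoc {n d : ℕ} (φ : Euc n → Euc d → EReal) (xb : Euc n) (γ : ℝ) (w : Euc d)
    (v : Euc n) : Set (Euc n) :=
  {x | ‖x - xb‖ ≤ γ ∧ φ x w ≠ ⊤ ∧
    ∀ y, ‖y - xb‖ ≤ γ → φ x w - ((⟪v, x⟫ : ℝ) : EReal) ≤ φ y w - ((⟪v, y⟫ : ℝ) : EReal)}

/-- Local optimal value `m_γ(w,v)` of `x ↦ φ(x,w) - ⟨v,x⟩` over the ball `‖x - xb‖ ≤ γ`. -/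
def infLoc {n d : ℕ} (φ : Euc n → Euc d → EReal) (xb : Euc n) (γ : ℝ) (w : Euc d)
    (v : Euc n) : EReal :=
  ⨅ x ∈ {x : Euc n | ‖x - xb‖ ≤ γ}, (φ x w - ((⟪v, x⟫ : ℝ) : EReal))

/-- `xb` is a fully stable locally optimal solution of
`minimize φ(x,wb) - ⟨vb,x⟩` : for some `γ > 0` and neighborhoods `W × V` of `(wb,vb)`,
the local argmin map is single-valued and Lipschitz with value `xb` at `(wb,vb)`, and the
local optimal value function is finite and Lipschitz. -/
def FullyStableSol {n d : ℕ} (φ : Euc n → Euc d → EReal) (xb : Euc n) (wb : Euc d)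
    (vb : Euc n) : Prop :=
  ∃ γ > (0 : ℝ), ∃ W ∈ 𝓝 wb, ∃ V ∈ 𝓝 vb,
    (∃ σ : Euc d × Euc n → Euc n,
      (∃ K : ℝ≥0, LipschitzOnWith K σ (W ×ˢ V)) ∧
      (∀ w ∈ W, ∀ v ∈ V, argminLoc φ xb γ w v = {σ (w, v)}) ∧ σ (wb, vb) = xb) ∧
    (∃ μ : Euc d × Euc n → ℝ,
      (∃ K : ℝ≥0, LipschitzOnWith K μ (W ×ˢ V)) ∧
      ∀ w ∈ W, ∀ v ∈ V, infLoc φ xb γ w v = ((μ (w, v) : ℝ) : EReal))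

/-- The partial limiting subdifferential `∂ₓψ(x,w)` defined through the limiting normal
cone to the epigraph of `ψ(·,w)`. -/
def partialSubdiffX {n d : ℕ} (ψ : Euc n → Euc d → EReal) (x : Euc n) (w : Euc d) :
    Set (Euc n) :=
  {v | ∃ r : ℝ, ψ x w = (r : EReal) ∧
    pl2 v (-1 : ℝ) ∈ limitingNormal
      {q : WithLp 2 (Euc n × ℝ) |
        ψ ((WithLp.equiv 2 (Euc n × ℝ)) q).1 w ≤ ((((WithLp.equiv 2 (Euc n × ℝ)) q).2 : ℝ) : EReal)}
      (pl2 x r)}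

/-- The coderivative `D*∂ₓψ(xb,wb,qb)(u)` of the partial subdifferential mapping,
via the limiting normal cone to its graph in `ℝ^n × ℝ^d × ℝ^n`. -/
def coderivPartialSubdiffX {n d : ℕ} (ψ : Euc n → Euc d → EReal) (xb : Euc n) (wb : Euc d)
    (qb : Euc n) (u : Euc n) : Set (Euc n × Euc d) :=
  {P | pl2 (pl2 P.1 P.2) (-u) ∈ limitingNormal
    {t : WithLp 2 (WithLp 2 (Euc n × Euc d) × Euc n) |
      ((WithLp.equiv 2 (WithLp 2 (Euc n × Euc d) × Euc n)) t).2 ∈ partialSubdiffX ψ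
        ((WithLp.equiv 2 (Euc n × Euc d)) (((WithLp.equiv 2 (WithLp 2 (Euc n × Euc d) × Euc n)) t).1)).1
        ((WithLp.equiv 2 (Euc n × Euc d)) (((WithLp.equiv 2 (WithLp 2 (Euc n × Euc d) × Euc n)) t).1)).2}
    (pl2 (pl2 xb wb) qb)}

/-- Partial Hessian in `x` : the derivative in `x` of the partial gradient in `x`. -/
def hessXX {n d : ℕ} (g : Euc n → Euc d → ℝ) (xb : Euc n) (wb : Euc d) : Euc n →L[ℝ] Euc n :=
  fderiv ℝ (fun x => gradient (fun x' => g x' wb) x) xb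

/-- Mixed partial Hessian: derivative in `w` of the partial gradient in `x`. -/
def hessWX {n d : ℕ} (g : Euc n → Euc d → ℝ) (xb : Euc n) (wb : Euc d) : Euc d →L[ℝ] Euc n :=
  fderiv ℝ (fun w => gradient (fun x' => g x' w) xb) wb

/-! ### Auxiliary lemmas for the Farkas-type cone description -/

section FarkasAux

variable {m : ℕ}

/-- Nonnegative combinations of the elements of a finite set. -/
def coneComb (T : Finset (Euc m)) : Set (Euc m) :=
  {x | ∃ c : Euc m → ℝ, (∀ s, 0 ≤ c s) ∧ x = ∑ s ∈ T, c s • s}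

lemma zero_mem_coneComb (T : Finset (Euc m)) : (0 : Euc m) ∈ coneComb T :=
  ⟨fun _ => 0, fun _ => le_refl 0, by simp⟩

lemma mem_coneComb_of_mem {T : Finset (Euc m)} {x : Euc m} (hx : x ∈ T) : x ∈ coneComb T := by
  classical
  refine ⟨fun s => if s = x then 1 else 0, fun s => ?_, ?_⟩
  · dsimp only; split <;> norm_num
  · have h : ∀ s ∈ T, (if s = x then (1:ℝ) else 0) • s = if s = x then s else 0 :=
      fun s _ => by split <;> simp
    rw [show (∑ s ∈ T, (fun s => if s = x then (1:ℝ) else 0) s • s)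
        = ∑ s ∈ T, (if s = x then (1:ℝ) else 0) • s from rfl,
      Finset.sum_congr rfl h, Finset.sum_ite_eq' T x (fun s => s), if_pos hx]

lemma coneComb_mono {T T' : Finset (Euc m)} (h : T ⊆ T') : coneComb T ⊆ coneComb T' := by
  classical
  rintro x ⟨c, hc, rfl⟩
  refine ⟨fun s => if s ∈ T then c s else 0, fun s => ?_, ?_⟩
  · dsimp only; split
    · exact hc _
    · exact le_refl 0
  · rw [← Finset.sum_subset h (fun s _ hs => by simp [hs])]
    exact Finset.sum_congr rfl fun s hs => by simp [hs]

lemma coneHull_coe (T : Finset (Euc m)) : coneHull (T : Set (Euc m)) = coneComb T := by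
  ext x
  constructor
  · rintro ⟨nn, c, y, hc, hy, rfl⟩
    refine ⟨fun s => ∑ i ∈ Finset.univ.filter (fun i => y i = s), c i,
      fun s => Finset.sum_nonneg fun i _ => hc i, ?_⟩
    rw [← Finset.sum_fiberwise_of_maps_to (g := y) (t := T) (fun i _ => hy i)
      (fun i => c i • y i)]
    refine Finset.sum_congr rfl fun s _ => ?_
    rw [Finset.sum_smul]
    exact Finset.sum_congr rfl fun i hi => by
      rw [(Finset.mem_filter.mp hi).2]
  · rintro ⟨c, hc, rfl⟩
    refine ⟨T.card, fun i => c ↑(T.equivFin.symm i), fun i => ↑(T.equivFin.symm i),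
      fun i => hc _, fun i => (T.equivFin.symm i).2, ?_⟩
    rw [← Finset.sum_coe_sort T (fun s => c s • s)]
    exact (Equiv.sum_comp T.equivFin.symm (fun j : ↑T => c ↑j • (↑j : Euc m))).symm

/-- Carathéodory-type reduction for conic combinations. -/
lemma coneComb_cara : ∀ (n : ℕ) (T : Finset (Euc m)), T.card ≤ n →
    ∀ c : Euc m → ℝ, (∀ s, 0 ≤ c s) →
    ∃ T' : Finset (Euc m), T' ⊆ T ∧ (LinearIndependent ℝ (fun s : ↑T' => (s : Euc m))) ∧
      ∃ c' : Euc m → ℝ, (∀ s, 0 ≤ c' s) ∧ ∑ s ∈ T', c' s • s = ∑ s ∈ T, c s • s := by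
  intro n
  induction n with
  | zero =>
    intro T hT c hc
    have hTe : T = ∅ := Finset.card_eq_zero.mp (Nat.le_zero.mp hT)
    subst hTe
    exact ⟨∅, Finset.Subset.refl _, linearIndependent_empty_type, c, hc, rfl⟩
  | succ n ih =>
    intro T hT c hc
    by_cases hli : LinearIndependent ℝ (fun s : ↑T => (s : Euc m))
    · exact ⟨T, Finset.Subset.refl _, hli, c, hc, rfl⟩
    obtain ⟨g, hgsum, i0, hgi0⟩ := Fintype.not_linearIndependent_iff.mp hli
    have hex : ∃ G : Euc m → ℝ, (∑ s ∈ T, G s • s = 0) ∧ ∃ s1 ∈ T, 0 < G s1 := by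
      classical
      set G : Euc m → ℝ := fun s => if h : s ∈ T then g ⟨s, h⟩ else 0 with hGdef
      have hGsum : ∑ s ∈ T, G s • s = 0 := by
        rw [← hgsum, Finset.univ_eq_attach, ← Finset.sum_attach T (fun s => G s • s)]
        exact Finset.sum_congr rfl fun i _ => by simp [hGdef, i.2]
      have hGi0 : G ↑i0 = g i0 := by simp [hGdef, i0.2]
      rcases lt_or_gt_of_ne hgi0 with hneg | hpos
      · refine ⟨fun s => -G s, ?_, ↑i0, i0.2, ?_⟩
        · rw [← neg_zero, ← hGsum, ← Finset.sum_neg_distrib]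
          exact Finset.sum_congr rfl fun s _ => (neg_smul _ _)
        · dsimp only; rw [hGi0]; exact neg_pos.mpr hneg
      · exact ⟨G, hGsum, ↑i0, i0.2, hGi0 ▸ hpos⟩
    obtain ⟨G, hG, s1, hs1T, hs1pos⟩ := hex
    classical
    set P := T.filter (fun s => 0 < G s) with hPdef
    have hPne : P.Nonempty := ⟨s1, Finset.mem_filter.mpr ⟨hs1T, hs1pos⟩⟩
    obtain ⟨s0, hs0P, hs0eq⟩ := Finset.exists_mem_eq_inf' hPne (fun s => c s / G s)
    set lam := P.inf' hPne (fun s => c s / G s) with hlamdef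
    have hs0T : s0 ∈ T := (Finset.mem_filter.mp hs0P).1
    have hs0G : 0 < G s0 := (Finset.mem_filter.mp hs0P).2
    have hlam0 : 0 ≤ lam := by
      rw [hs0eq]; exact div_nonneg (hc s0) hs0G.le
    have hlamle : ∀ s ∈ T, 0 < G s → lam * G s ≤ c s := by
      intro s hs hGs
      have h1 : lam ≤ c s / G s := Finset.inf'_le _ (Finset.mem_filter.mpr ⟨hs, hGs⟩)
      calc lam * G s ≤ (c s / G s) * G s := by nlinarith
        _ = c s := div_mul_cancel₀ _ hGs.ne'
    set c2 : Euc m → ℝ := fun s => if s ∈ T.erase s0 then c s - lam * G s else 0 with hc2def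
    have hc2nn : ∀ s, 0 ≤ c2 s := by
      intro s
      rw [hc2def]
      dsimp only
      split
      · rename_i hmem
        have hsT : s ∈ T := Finset.mem_of_mem_erase hmem
        by_cases hGs : 0 < G s
        · linarith [hlamle s hsT hGs]
        · push_neg at hGs
          nlinarith [hc s]
      · exact le_refl 0
    have hsum2 : ∑ s ∈ T.erase s0, c2 s • s = ∑ s ∈ T, c s • s := by
      have h1 : ∑ s ∈ T.erase s0, c2 s • s = ∑ s ∈ T.erase s0, (c s - lam * G s) • s :=
        Finset.sum_congr rfl fun s hs => by rw [hc2def]; simp [hs]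
      have hzero : c s0 - lam * G s0 = 0 := by
        rw [hs0eq, div_mul_cancel₀ _ hs0G.ne', sub_self]
      have h2 : (∑ s ∈ T.erase s0, (c s - lam * G s) • s) + (c s0 - lam * G s0) • s0
          = ∑ s ∈ T, (c s - lam * G s) • s := Finset.sum_erase_add T _ hs0T
      rw [hzero, zero_smul, add_zero] at h2
      have h3 : ∑ s ∈ T, (c s - lam * G s) • s
          = (∑ s ∈ T, c s • s) - lam • ∑ s ∈ T, G s • s := by
        rw [Finset.smul_sum, ← Finset.sum_sub_distrib]
        exact Finset.sum_congr rfl fun s _ => by rw [sub_smul, smul_smul]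
      rw [h1, h2, h3, hG, smul_zero, sub_zero]
    have hcard : (T.erase s0).card ≤ n := by
      have h := Finset.card_erase_of_mem hs0T
      omega
    obtain ⟨T', hT'sub, hT'li, c', hc', hsum'⟩ := ih (T.erase s0) hcard c2 hc2nn
    exact ⟨T', hT'sub.trans (Finset.erase_subset _ _), hT'li, c', hc', by rw [hsum', hsum2]⟩

lemma isClosed_coneComb_of_li {T : Finset (Euc m)}
    (h : LinearIndependent ℝ (fun s : ↑T => (s : Euc m))) : IsClosed (coneComb T) := by
  classical
  let L : (↑T → ℝ) →ₗ[ℝ] Euc m :=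
    { toFun := fun f => ∑ i, f i • (i : Euc m)
      map_add' := fun f g => by simp [add_smul, Finset.sum_add_distrib]
      map_smul' := fun r f => by simp [smul_smul, Finset.smul_sum] }
  have hker : LinearMap.ker L = ⊥ := by
    rw [LinearMap.ker_eq_bot']
    intro f hf
    exact funext (Fintype.linearIndependent_iff.mp h f hf)
  have hemb := LinearMap.isClosedEmbedding_of_injective (f := L) hker
  have himg : coneComb T = L '' {f : ↑T → ℝ | ∀ i, 0 ≤ f i} := by
    ext x
    constructor
    · rintro ⟨c, hcnn, rfl⟩
      refine ⟨fun i => c ↑i, fun i => hcnn _, ?_⟩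
      show (∑ i : ↑T, c ↑i • (↑i : Euc m)) = _
      rw [Finset.sum_coe_sort T (fun s => c s • s)]
    · rintro ⟨f, hf, rfl⟩
      refine ⟨fun s => if h : s ∈ T then f ⟨s, h⟩ else 0, fun s => ?_, ?_⟩
      · dsimp only; split
        · exact hf _
        · exact le_refl 0
      show L f = ∑ s ∈ T, _
      rw [← Finset.sum_coe_sort T
        (fun s => (if h : s ∈ T then f ⟨s, h⟩ else 0) • s)]
      exact Finset.sum_congr rfl fun i _ => by simp [i.2]
  rw [himg]
  refine hemb.isClosedMap _ ?_
  have : {f : ↑T → ℝ | ∀ i, 0 ≤ f i} = ⋂ i, {f : ↑T → ℝ | 0 ≤ f i} := by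
    ext f; simp [Set.mem_iInter]
  rw [this]
  exact isClosed_iInter fun i => isClosed_le continuous_const (continuous_apply i)

lemma isClosed_coneComb (S : Finset (Euc m)) : IsClosed (coneComb S) := by
  classical
  have hrepr : coneComb S = ⋃ T ∈ S.powerset,
      (if LinearIndependent ℝ (fun s : ↑T => (s : Euc m)) then coneComb T else (∅ : Set (Euc m))) := by
    ext x
    simp only [Set.mem_iUnion, exists_prop]
    constructor
    · rintro ⟨c, hcnn, rfl⟩
      obtain ⟨T', hsub, hli, c', hc', hsum⟩ := coneComb_cara S.card S le_rfl c hcnn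
      exact ⟨T', Finset.mem_powerset.mpr hsub, by rw [if_pos hli]; exact ⟨c', hc', hsum.symm⟩⟩
    · rintro ⟨T, hT, hx⟩
      split at hx
      · exact coneComb_mono (Finset.mem_powerset.mp hT) hx
      · exact absurd hx (Set.notMem_empty x)
  rw [hrepr]
  refine Set.Finite.isClosed_biUnion (S.powerset).finite_toSet fun T _ => ?_
  split
  · exact isClosed_coneComb_of_li ‹_›
  · exact isClosed_empty

/-- The conic combinations of a finite set form a convex cone. -/
def coneCombCone (S : Finset (Euc m)) : ConvexCone ℝ (Euc m) where
  carrier := coneComb S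
  smul_mem' := by
    rintro t ht x ⟨c, hcnn, rfl⟩
    exact ⟨fun s => t * c s, fun s => mul_nonneg ht.le (hcnn s),
      by rw [Finset.smul_sum]; exact Finset.sum_congr rfl fun s _ => smul_smul t (c s) s⟩
  add_mem' := by
    rintro x ⟨c1, h1, rfl⟩ y ⟨c2, h2, rfl⟩
    exact ⟨fun s => c1 s + c2 s, fun s => add_nonneg (h1 s) (h2 s),
      by rw [← Finset.sum_add_distrib]; exact Finset.sum_congr rfl fun s _ => (add_smul _ _ _).symm⟩

/-- Farkas' lemma: a vector making a nonpositive pairing with everything in the dual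
of `S` lies in the cone generated by `S`. -/
lemma farkas_mem (S : Finset (Euc m)) (v : Euc m)
    (hv : ∀ w : Euc m, (∀ x ∈ S, ⟪x, w⟫ ≤ 0) → ⟪v, w⟫ ≤ 0) : v ∈ coneComb S := by
  by_contra hvC
  let K : ProperCone ℝ (Euc m) :=
    { carrier := coneComb S
      add_mem' := fun hx hy => (coneCombCone S).add_mem' hx hy
      zero_mem' := zero_mem_coneComb S
      smul_mem' := by
        rintro c x ⟨f, hf, rfl⟩
        exact ⟨fun s => (c : ℝ) * f s, fun s => mul_nonneg c.2 (hf s),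
          by change (c : ℝ) • (∑ s ∈ S, f s • s : Euc m) = _; rw [Finset.smul_sum]
             exact Finset.sum_congr rfl fun s _ => smul_smul _ _ _⟩
      isClosed' := isClosed_coneComb S }
  obtain ⟨y, hy1, hy2⟩ := ProperCone.hyperplane_separation' K (x₀ := v) hvC
  have h1 : ∀ x ∈ S, ⟪x, -y⟫ ≤ 0 := fun x hx => by
    rw [inner_neg_right]
    exact neg_nonpos.mpr (hy1 x (mem_coneComb_of_mem hx))
  have h2 := hv _ h1
  rw [inner_neg_right] at h2
  have h3 := real_inner_comm y v
  linarith

end FarkasAux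


lemma real_limsup_nonpos {α : Type*} {f : Filter α} {u : α → ℝ} (h : ∀ᶠ x in f, u x ≤ 0) :
    Filter.limsup u f ≤ 0 := by
  rw [Filter.limsup_eq]
  by_cases hb : BddBelow {a : ℝ | ∀ᶠ x in f, u x ≤ a}
  · exact csInf_le hb h
  · rw [Real.sInf_of_not_bddBelow hb]

/-- The singular subdifferential of a CPWL function `θ` at `zb`, which
equals the convex normal cone `{v : ⟨v, z - zb⟩ ≤ 0 for all z ∈ dom θ} = cone{d i : i ∈ I(zb)}`,
is contained in `∂²θ(zb,vb)(0)`; consequently, the second-order qualification condition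
implies the first-order qualification condition. -/
theorem singular_subdiff_subset_sosd_at_zero {n dd m l p : ℕ} (hl : 0 < l)
    (a : Fin l → Euc m) (α : Fin l → ℝ) (d : Fin p → Euc m) (β : Fin p → ℝ)
    (hdom : (cpwlDom d β).Nonempty) (zb : Euc m) (hzb : zb ∈ cpwlDom d β)
    (vb : Euc m) (hvb : vb ∈ subdiff (cpwlFun a α d β) zb)
    (Φ : Euc n × Euc dd → Euc m) (xb : Euc n) (wb : Euc dd)
    (hΦ : ContDiffAt ℝ 2 Φ (xb, wb)) (hΦzb : Φ (xb, wb) = zb) :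
    coneHull (d '' Iact d β zb) = {v : Euc m | ∀ z ∈ cpwlDom d β, ⟪v, z - zb⟫ ≤ 0} ∧
    {v : Euc m | ∀ z ∈ cpwlDom d β, ⟪v, z - zb⟫ ≤ 0} ⊆ sosd (cpwlFun a α d β) zb vb 0 ∧
    (sosd (cpwlFun a α d β) zb vb 0 ∩
        {y | ContinuousLinearMap.adjoint (fderiv ℝ (fun x => Φ (x, wb)) xb) y = 0} = {0} →
      {v : Euc m | ∀ z ∈ cpwlDom d β, ⟪v, z - zb⟫ ≤ 0} ∩
        {y | ContinuousLinearMap.adjoint (fderiv ℝ (fun x => Φ (x, wb)) xb) y = 0} = {0}) := by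
  classical
  set S : Finset (Euc m) := (Finset.univ.filter (fun i => ⟪d i, zb⟫ = β i)).image d with hSdef
  have hScoe : (S : Set (Euc m)) = d '' Iact d β zb := by
    ext x
    simp [hSdef, Iact, Set.mem_image]
  have hSmem : ∀ i : Fin p, ⟪d i, zb⟫ = β i → d i ∈ S := fun i hi =>
    Finset.mem_image.mpr ⟨i, Finset.mem_filter.mpr ⟨Finset.mem_univ i, hi⟩, rfl⟩
  have hSrev : ∀ x ∈ S, ∃ i : Fin p, ⟪d i, zb⟫ = β i ∧ d i = x := by
    intro x hx
    obtain ⟨i, hi, rfl⟩ := Finset.mem_image.mp hx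
    exact ⟨i, (Finset.mem_filter.mp hi).2, rfl⟩
  have part1 : coneHull (d '' Iact d β zb)
      = {v : Euc m | ∀ z ∈ cpwlDom d β, ⟪v, z - zb⟫ ≤ 0} := by
    rw [← hScoe, coneHull_coe]
    apply Set.eq_of_subset_of_subset
    · rintro x ⟨c, hcnn, rfl⟩ z hz
      rw [sum_inner]
      refine Finset.sum_nonpos fun x hx => ?_
      rw [real_inner_smul_left]
      obtain ⟨i, hi, rfl⟩ := hSrev x hx
      have hle : ⟪d i, z - zb⟫ ≤ 0 := by
        rw [inner_sub_right, hi]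
        have := hz i
        linarith
      exact mul_nonpos_iff.mpr (Or.inl ⟨hcnn _, hle⟩)
    · intro v hv
      apply farkas_mem
      intro w hw
      have hev : ∀ᶠ t in 𝓝[>] (0:ℝ), zb + t • w ∈ cpwlDom d β := by
        have hAll : ∀ᶠ t in 𝓝[>] (0:ℝ), ∀ i, ⟪d i, zb + t • w⟫ ≤ β i := by
          refine Filter.eventually_all.mpr fun i => ?_
          by_cases hi : ⟪d i, zb⟫ = β i
          · refine eventually_nhdsWithin_of_forall fun t ht => ?_
            have hdw : ⟪d i, w⟫ ≤ 0 := hw _ (hSmem i hi)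
            have ht' : (0:ℝ) < t := ht
            rw [inner_add_right, real_inner_smul_right]
            nlinarith
          · have hlt : ⟪d i, zb⟫ < β i := lt_of_le_of_ne (hzb i) hi
            have hcont : Filter.Tendsto (fun t : ℝ => ⟪d i, zb + t • w⟫) (𝓝 0)
                (𝓝 ⟪d i, zb⟫) := by
              have hco : Continuous fun t : ℝ => ⟪d i, zb + t • w⟫ :=
                Continuous.inner continuous_const (by continuity)
              simpa using hco.tendsto 0
            exact ((hcont.eventually_lt_const hlt).filter_mono nhdsWithin_le_nhds).mono
              fun t ht => ht.le
        exact hAll.mono fun t ht => ht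
      have hself : ∀ᶠ t in 𝓝[>] (0:ℝ), t ∈ Set.Ioi (0:ℝ) := self_mem_nhdsWithin
      obtain ⟨t, ht0, htmem⟩ := (hself.and hev).exists
      have hvt := hv _ htmem
      rw [add_sub_cancel_left, real_inner_smul_right] at hvt
      have ht0' : (0:ℝ) < t := ht0
      nlinarith
  have hdommem : ∀ {z u : Euc m}, u ∈ subdiff (cpwlFun a α d β) z → z ∈ cpwlDom d β := by
    intro z u hu
    by_contra hznot
    obtain ⟨z0, hz0⟩ := hdom
    have h2 := hu z0
    simp only [cpwlFun] at h2
    rw [if_neg hznot, if_pos hz0, EReal.top_add_coe] at h2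
    exact (EReal.coe_ne_top _) (top_le_iff.mp h2)
  have part2 : {v : Euc m | ∀ z ∈ cpwlDom d β, ⟪v, z - zb⟫ ≤ 0}
      ⊆ sosd (cpwlFun a α d β) zb vb 0 := by
    intro v hv
    refine ⟨fun _ => pl2 zb vb, fun _ => pl2 v (-0), fun k => ?_, tendsto_const_nhds,
      tendsto_const_nhds, fun k => ?_⟩
    · show ((WithLp.equiv 2 (Euc m × Euc m)) (pl2 zb vb)).2
        ∈ subdiff (cpwlFun a α d β) ((WithLp.equiv 2 (Euc m × Euc m)) (pl2 zb vb)).1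
      simpa [pl2] using hvb
    · refine real_limsup_nonpos ?_
      refine eventually_nhdsWithin_of_forall fun q hq => ?_
      have hq1 : ((WithLp.equiv 2 (Euc m × Euc m)) q).1 ∈ cpwlDom d β := hdommem hq
      have hnum : ⟪pl2 v (-0 : Euc m), q - pl2 zb vb⟫ ≤ 0 := by
        have hexp : ⟪pl2 v (-0 : Euc m), q - pl2 zb vb⟫
            = ⟪v, ((WithLp.equiv 2 (Euc m × Euc m)) q).1 - zb⟫
              + ⟪(-0 : Euc m), ((WithLp.equiv 2 (Euc m × Euc m)) q).2 - vb⟫ := rfl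
        rw [hexp, neg_zero, inner_zero_left, add_zero]
        exact hv _ hq1
      exact div_nonpos_iff.mpr (Or.inr ⟨hnum, norm_nonneg _⟩)
  refine ⟨part1, part2, fun h => ?_⟩
  apply Set.eq_of_subset_of_subset
  · intro v hvmem
    have hmem2 : v ∈ sosd (cpwlFun a α d β) zb vb 0 ∩
        {y | ContinuousLinearMap.adjoint (fderiv ℝ (fun x => Φ (x, wb)) xb) y = 0} :=
      ⟨part2 hvmem.1, hvmem.2⟩
    rw [h] at hmem2
    exact hmem2
  · intro v hvmem
    rw [Set.mem_singleton_iff] at hvmem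
    subst hvmem
    refine ⟨fun z hz => ?_, ?_⟩
    · simp
    · show _ = 0
      rw [map_zero]
end
end

section
/- Let θ be a proper convex piecewise linear function on ℝ^m, let z̄ ∈ dom θ, assume 0 belongs to the affine hull of ∂θ(z̄), and set s := dim S(z̄) ≤ m. Then θ is C^∞-reducible at z̄ via a linear map: there exist an s×m real matrix B of full rank s (so that the linear map z ↦ Bz is surjective onto ℝ^s) with ker B = S(z̄)^⊥, a proper convex piecewise linear function ϑ : ℝ^s → ℝ ∪ {+∞}, and an open neighborhood O of z̄ such that θ(z) = ϑ(Bz) for all z ∈ O. -/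
noncomputable section
open Set Filter Topology Metric
open scoped RealInnerProductSpace Pointwise NNReal Classical

variable {F G : Type*} [NormedAddCommGroup F] [InnerProductSpace ℝ F]
  [NormedAddCommGroup G] [InnerProductSpace ℝ G]

section MyAux
variable {m l p : ℕ}

lemma my_cpwl_le_coe_iff (hl : 0 < l) (a : Fin l → Euc m) (α : Fin l → ℝ)
    (d : Fin p → Euc m) (β : Fin p → ℝ) (z : Euc m) (t : ℝ) :
    cpwlFun a α d β z ≤ (t : EReal) ↔ (∀ i, ⟪a i, z⟫ - α i ≤ t) ∧ ∀ j, ⟪d j, z⟫ ≤ β j := by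
  haveI : Nonempty (Fin l) := ⟨⟨0, hl⟩⟩
  unfold cpwlFun
  by_cases h : z ∈ cpwlDom d β
  · rw [if_pos h, EReal.coe_le_coe_iff,
      ciSup_le_iff (Set.Finite.bddAbove (Set.finite_range _))]
    exact ⟨fun H => ⟨H, h⟩, fun H => H.1⟩
  · rw [if_neg h]
    constructor
    · intro ht
      exact absurd ht (by simp)
    · intro H
      exact absurd H.2 h

lemma my_mem_subdiff (hl : 0 < l) (a : Fin l → Euc m) (α : Fin l → ℝ)
    (d : Fin p → Euc m) (β : Fin p → ℝ) (zb : Euc m) (hzb : zb ∈ cpwlDom d β) (i : Fin l)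
    (hi : ⟪a i, zb⟫ - α i = ⨆ i', ⟪a i', zb⟫ - α i') (u : Euc m)
    (hu : ∀ z ∈ cpwlDom d β, ⟪u, z - zb⟫ ≤ 0) :
    a i + u ∈ subdiff (cpwlFun a α d β) zb := by
  haveI : Nonempty (Fin l) := ⟨⟨0, hl⟩⟩
  intro z'
  by_cases hz' : z' ∈ cpwlDom d β
  · have h1 : cpwlFun a α d β zb = (((⨆ i', ⟪a i', zb⟫ - α i') : ℝ) : EReal) := if_pos hzb
    have h2 : cpwlFun a α d β z' = (((⨆ i', ⟪a i', z'⟫ - α i') : ℝ) : EReal) := if_pos hz'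
    rw [h1, h2, ← EReal.coe_add, EReal.coe_le_coe_iff]
    have key : (⨆ i', ⟪a i', zb⟫ - α i') + ⟪a i + u, z' - zb⟫ ≤ ⟪a i, z'⟫ - α i := by
      rw [← hi, inner_add_left]
      have h3 : ⟪a i, z' - zb⟫ = ⟪a i, z'⟫ - ⟪a i, zb⟫ := inner_sub_right _ _ _
      have h4 := hu z' hz'
      linarith
    exact key.trans (le_ciSup (f := fun i' => ⟪a i', z'⟫ - α i') (Set.Finite.bddAbove (Set.finite_range _)) i)
  · have h2 : cpwlFun a α d β z' = ⊤ := if_neg hz'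
    rw [h2]; exact le_top

end MyAux

set_option maxHeartbeats 2000000

/-- `C^∞`-reducibility of CPWL functions via a linear map: if
`0 ∈ aff ∂θ(zb)` and `s := dim S(zb)`, then `s ≤ m` and there exist a surjective (full rank)
linear map `B : ℝ^m → ℝ^s` with `ker B = S(zb)^⊥`, a proper CPWL function `ϑ : ℝ^s → ℝ ∪ {+∞}`
and an open neighborhood `O` of `zb` with `θ(z) = ϑ(Bz)` on `O`. -/
theorem cpwl_reducible_linear {m l p : ℕ} (hl : 0 < l)
    (a : Fin l → Euc m) (α : Fin l → ℝ) (d : Fin p → Euc m) (β : Fin p → ℝ)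
    (hdom : (cpwlDom d β).Nonempty) (zb : Euc m) (hzb : zb ∈ cpwlDom d β)
    (h0 : (0 : Euc m) ∈ affineSpan ℝ (subdiff (cpwlFun a α d β) zb)) :
    Module.finrank ℝ (Spar (cpwlFun a α d β) zb) ≤ m ∧
    ∃ B : Euc m →ₗ[ℝ] Euc (Module.finrank ℝ (Spar (cpwlFun a α d β) zb)),
      Function.Surjective B ∧
      LinearMap.ker B = (Spar (cpwlFun a α d β) zb)ᗮ ∧
      ∃ ϑ : Euc (Module.finrank ℝ (Spar (cpwlFun a α d β) zb)) → EReal,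
        IsCPWL ϑ ∧
        ∃ O : Set (Euc m), IsOpen O ∧ zb ∈ O ∧ ∀ z ∈ O, cpwlFun a α d β z = ϑ (B z) := by
  haveI : Nonempty (Fin l) := ⟨⟨0, hl⟩⟩
  classical
  set θ := cpwlFun a α d β with hθ
  set S := Spar θ zb with hSdef
  set M : ℝ := ⨆ i, ⟪a i, zb⟫ - α i with hM
  obtain ⟨i0, hi0⟩ : ∃ i, ⟪a i, zb⟫ - α i = M := exists_eq_ciSup_of_finite
  have bdd : ∀ w : Euc m, BddAbove (Set.range fun i => ⟪a i, w⟫ - α i) :=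
    fun w => Set.Finite.bddAbove (Set.finite_range _)
  have hsubS : ∀ v ∈ subdiff θ zb, v ∈ S := by
    intro v hv
    have h1 : v ∈ affineSpan ℝ (subdiff θ zb) := subset_affineSpan ℝ _ hv
    have h2 := AffineSubspace.vsub_mem_direction h1 h0
    simpa [Spar, hSdef] using h2
  have haS : ∀ i : Fin l, ⟪a i, zb⟫ - α i = M → a i ∈ S := by
    intro i hi
    have h1 := my_mem_subdiff hl a α d β zb hzb i (hi.trans hM) 0 (fun z _ => by simp)
    rw [add_zero] at h1
    exact hsubS _ h1
  have hdS : ∀ j : Fin p, ⟪d j, zb⟫ = β j → d j ∈ S := by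
    intro j hj
    have h1 : a i0 + d j ∈ subdiff θ zb := by
      apply my_mem_subdiff hl a α d β zb hzb i0 (hi0.trans hM)
      intro z hz
      have h2 := hz j
      rw [inner_sub_right]
      linarith
    have h2 := hsubS _ h1
    have h3 := haS i0 hi0
    have h4 := S.sub_mem h2 h3
    simpa using h4
  have hfr : Module.finrank ℝ S ≤ m := by
    have h1 := Submodule.finrank_le S
    simpa [finrank_euclideanSpace_fin] using h1
  refine ⟨hfr, ?_⟩
  set ob := stdOrthonormalBasis ℝ S with hob
  set B : Euc m →ₗ[ℝ] Euc (Module.finrank ℝ S) :=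
    (ob.repr.toLinearEquiv.toLinearMap).comp (S.orthogonalProjectionOnto).toLinearMap with hB
  have hBapp : ∀ z, B z = ob.repr (S.orthogonalProjectionOnto z) := fun z => rfl
  set J : Euc (Module.finrank ℝ S) →ₗ[ℝ] Euc m :=
    S.subtype.comp ob.repr.symm.toLinearEquiv.toLinearMap with hJ
  have hJapp : ∀ y, J y = (ob.repr.symm y : Euc m) := fun y => rfl
  have hJB : ∀ z, J (B z) = (S.orthogonalProjectionOnto z : Euc m) := by
    intro z
    rw [hJapp, hBapp, LinearIsometryEquiv.symm_apply_apply]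
  have hBsurj : Function.Surjective B := by
    intro y
    refine ⟨(ob.repr.symm y : S), ?_⟩
    rw [hBapp, Submodule.orthogonalProjectionOnto_mem_subspace_eq_self]
    simp
  have hker : LinearMap.ker B = Sᗮ := by
    ext z
    rw [LinearMap.mem_ker, hBapp, ← Submodule.orthogonalProjectionOnto_eq_zero_iff (K := S)]
    constructor
    · intro h
      have h1 : ob.repr (S.orthogonalProjectionOnto z) = ob.repr 0 := by simpa using h
      exact ob.repr.injective h1
    · intro h
      rw [h]
      simp
  refine ⟨B, hBsurj, hker, ?_⟩
  set ϑ : Euc (Module.finrank ℝ S) → EReal :=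
    fun y => cpwlFun a α d β (zb + J (y - B zb)) with hϑ
  set c : Euc m := zb - J (B zb) with hc
  have hgy : ∀ y, zb + J (y - B zb) = J y + c := by
    intro y
    rw [map_sub, hc]
    abel
  have hcpwl : IsCPWL ϑ := by
    refine ⟨?_, ?_, ?_⟩
    · refine ⟨l + p,
        fun k => Sum.elim
          (fun i => ((innerₛₗ ℝ (a i)).comp
              (J.comp (LinearMap.fst ℝ (Euc (Module.finrank ℝ S)) ℝ))) -
            LinearMap.snd ℝ (Euc (Module.finrank ℝ S)) ℝ)
          (fun j => (innerₛₗ ℝ (d j)).comp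
              (J.comp (LinearMap.fst ℝ (Euc (Module.finrank ℝ S)) ℝ)))
          (finSumFinEquiv.symm k),
        fun k => Sum.elim (fun i => α i - ⟪a i, c⟫) (fun j => β j - ⟪d j, c⟫)
          (finSumFinEquiv.symm k), ?_⟩
      ext yt
      simp only [Set.mem_setOf_eq]
      have hval : ϑ yt.1 = cpwlFun a α d β (J yt.1 + c) := by
        rw [hϑ]
        simp only []
        rw [hgy]
      rw [hval, my_cpwl_le_coe_iff hl]
      constructor
      · rintro ⟨hA, hD⟩ k
        rcases hk : finSumFinEquiv.symm k with i | j
        · have h1 := hA i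
          rw [inner_add_right] at h1
          simp only [Sum.elim_inl, LinearMap.sub_apply, LinearMap.comp_apply,
            LinearMap.fst_apply, LinearMap.snd_apply, innerₛₗ_apply_apply]
          linarith
        · have h1 := hD j
          rw [inner_add_right] at h1
          simp only [Sum.elim_inr, LinearMap.comp_apply, LinearMap.fst_apply, innerₛₗ_apply_apply]
          linarith
      · intro h
        constructor
        · intro i
          have h1 := h (finSumFinEquiv (Sum.inl i))
          rw [Equiv.symm_apply_apply] at h1
          simp only [Sum.elim_inl, LinearMap.sub_apply, LinearMap.comp_apply,
            LinearMap.fst_apply, LinearMap.snd_apply, innerₛₗ_apply_apply] at h1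
          rw [inner_add_right]
          linarith
        · intro j
          have h1 := h (finSumFinEquiv (Sum.inr j))
          rw [Equiv.symm_apply_apply] at h1
          simp only [Sum.elim_inr, LinearMap.comp_apply, LinearMap.fst_apply,
            innerₛₗ_apply_apply] at h1
          rw [inner_add_right]
          linarith
    · intro y
      rw [hϑ]
      simp only [cpwlFun]
      split_ifs
      · exact EReal.coe_ne_bot _
      · simp
    · refine ⟨B zb, ?_⟩
      have h1 : ϑ (B zb) = cpwlFun a α d β zb := by
        rw [hϑ]
        simp only [sub_self, map_zero, add_zero]
      rw [h1]
      rw [show cpwlFun a α d β zb = (((⨆ i, ⟪a i, zb⟫ - α i) : ℝ) : EReal) from if_pos hzb]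
      exact EReal.coe_ne_top _
  have hevd : ∀ j : Fin p, ∀ᶠ w in 𝓝 zb, ⟪d j, zb⟫ < β j → ⟪d j, w⟫ < β j := by
    intro j
    by_cases hj : ⟪d j, zb⟫ < β j
    · have hopen : IsOpen {w : Euc m | ⟪d j, w⟫ < β j} :=
        isOpen_lt (continuous_const.inner continuous_id) continuous_const
      filter_upwards [hopen.mem_nhds hj] with w hw _
      exact hw
    · exact Filter.Eventually.of_forall fun w h => absurd h hj
  have heva : ∀ i i' : Fin l, ∀ᶠ w in 𝓝 zb,
      (⟪a i, zb⟫ - α i < M ∧ ⟪a i', zb⟫ - α i' = M) →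
        ⟪a i, w⟫ - α i < ⟪a i', w⟫ - α i' := by
    intro i i'
    by_cases hii : ⟪a i, zb⟫ - α i < M ∧ ⟪a i', zb⟫ - α i' = M
    · have hopen : IsOpen {w : Euc m | ⟪a i, w⟫ - α i < ⟪a i', w⟫ - α i'} :=
        isOpen_lt ((continuous_const.inner continuous_id).sub continuous_const)
          ((continuous_const.inner continuous_id).sub continuous_const)
      have hmem : zb ∈ {w : Euc m | ⟪a i, w⟫ - α i < ⟪a i', w⟫ - α i'} := by
        have := hii.1
        rw [← hii.2] at this
        exact this
      filter_upwards [hopen.mem_nhds hmem] with w hw _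
      exact hw
    · exact Filter.Eventually.of_forall fun w h => absurd h hii
  have hev : ∀ᶠ w in 𝓝 zb,
      (∀ j, ⟪d j, zb⟫ < β j → ⟪d j, w⟫ < β j) ∧
      ∀ i i', (⟪a i, zb⟫ - α i < M ∧ ⟪a i', zb⟫ - α i' = M) →
        ⟪a i, w⟫ - α i < ⟪a i', w⟫ - α i' :=
    (eventually_all.2 hevd).and (eventually_all.2 fun i => eventually_all.2 (heva i))
  obtain ⟨ε, hε, hball⟩ := Metric.eventually_nhds_iff_ball.mp hev
  refine ⟨ϑ, hcpwl, Metric.ball zb ε, Metric.isOpen_ball, Metric.mem_ball_self hε, ?_⟩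
  intro z hz
  set z' : Euc m := zb + (S.orthogonalProjectionOnto (z - zb) : Euc m) with hz'def
  have hϑBz : ϑ (B z) = cpwlFun a α d β z' := by
    rw [hϑ]
    simp only []
    rw [← map_sub, hJB]
  have hznorm : ‖z - zb‖ < ε := by
    rw [← dist_eq_norm]
    exact Metric.mem_ball.mp hz
  have hz'ball : z' ∈ Metric.ball zb ε := by
    rw [Metric.mem_ball, dist_eq_norm]
    have h1 : z' - zb = (S.orthogonalProjectionOnto (z - zb) : Euc m) := by
      rw [hz'def]
      abel
    rw [h1]
    calc ‖(S.orthogonalProjectionOnto (z - zb) : Euc m)‖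
        ≤ ‖(S.orthogonalProjectionOnto : Euc m →L[ℝ] S)‖ * ‖z - zb‖ :=
          (S.orthogonalProjectionOnto).le_opNorm _
      _ ≤ 1 * ‖z - zb‖ :=
          mul_le_mul_of_nonneg_right (Submodule.orthogonalProjectionOnto_norm_le S) (norm_nonneg _)
      _ = ‖z - zb‖ := one_mul _
      _ < ε := hznorm
  have hmatch : ∀ u, u ∈ S → ⟪u, z'⟫ = ⟪u, z⟫ := by
    intro u hu
    rw [hz'def, inner_add_right]
    have h1 : ⟪u, (S.orthogonalProjectionOnto (z - zb) : Euc m)⟫ = ⟪u, z - zb⟫ := by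
      have := Submodule.inner_orthogonalProjectionOnto_eq_of_mem_right (K := S) ⟨u, hu⟩ (z - zb)
      exact (real_inner_comm _ _).trans (this.trans (real_inner_comm _ _))
    rw [h1, inner_sub_right]
    ring
  obtain ⟨hQd, hQa⟩ := hball z hz
  obtain ⟨hQd', hQa'⟩ := hball z' hz'ball
  have hdomiff : z ∈ cpwlDom d β ↔ z' ∈ cpwlDom d β := by
    constructor
    · intro h j
      by_cases hj : ⟪d j, zb⟫ = β j
      · rw [hmatch (d j) (hdS j hj)]
        exact h j
      · exact le_of_lt (hQd' j (lt_of_le_of_ne (hzb j) hj))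
    · intro h j
      by_cases hj : ⟪d j, zb⟫ = β j
      · rw [← hmatch (d j) (hdS j hj)]
        exact h j
      · exact le_of_lt (hQd j (lt_of_le_of_ne (hzb j) hj))
  have hsup : (⨆ i, ⟪a i, z⟫ - α i) = ⨆ i, ⟪a i, z'⟫ - α i := by
    apply le_antisymm
    · apply ciSup_le
      intro i
      by_cases hi : ⟪a i, zb⟫ - α i = M
      · rw [← hmatch (a i) (haS i hi)]
        exact le_ciSup (bdd z') i
      · have hlt : ⟪a i, zb⟫ - α i < M :=
          lt_of_le_of_ne (hM ▸ le_ciSup (bdd zb) i) hi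
        have h1 := hQa i i0 ⟨hlt, hi0⟩
        calc ⟪a i, z⟫ - α i ≤ ⟪a i0, z⟫ - α i0 := le_of_lt h1
          _ = ⟪a i0, z'⟫ - α i0 := by rw [hmatch (a i0) (haS i0 hi0)]
          _ ≤ _ := le_ciSup (bdd z') i0
    · apply ciSup_le
      intro i
      by_cases hi : ⟪a i, zb⟫ - α i = M
      · rw [hmatch (a i) (haS i hi)]
        exact le_ciSup (bdd z) i
      · have hlt : ⟪a i, zb⟫ - α i < M :=
          lt_of_le_of_ne (hM ▸ le_ciSup (bdd zb) i) hi
        have h1 := hQa' i i0 ⟨hlt, hi0⟩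
        calc ⟪a i, z'⟫ - α i ≤ ⟪a i0, z'⟫ - α i0 := le_of_lt h1
          _ = ⟪a i0, z⟫ - α i0 := by rw [← hmatch (a i0) (haS i0 hi0)]
          _ ≤ _ := le_ciSup (bdd z) i0
  rw [hϑBz, hθ]
  simp only [cpwlFun]
  by_cases h : z ∈ cpwlDom d β
  · rw [if_pos h, if_pos (hdomiff.mp h), hsup]
  · rw [if_neg h, if_neg (fun h' => h (hdomiff.mpr h'))]
end
end

section
/- Let ξ : ℝ^m → ℝ ∪ {+∞} be a proper, lower semicontinuous, convex piecewise linear function, let ȳ ∈ ℝ^m, α > 0, and 1 ≤ s < m. Write points of ℝ^m as y = (y_s, y_{m−s}) ∈ ℝ^s × ℝ^{m−s}. Assume that for every y in the open ball of radius α centered at ȳ, every subgradient v ∈ ∂ξ(y) has its last m − s components equal to zero, i.e., ∂ξ(y) ⊂ ℝ^s × {0}. Then for every point y = (y_s, y_{m−s}) in this open ball such that (y_s, ȳ_{m−s}) also lies in the ball, one has ξ(y_s, y_{m−s}) = ξ(y_s, ȳ_{m−s}), where ȳ_{m−s} denotes the last m − s components of ȳ. -/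
noncomputable section
open Set Filter Topology Metric
open scoped RealInnerProductSpace Pointwise NNReal Classical

variable {F G : Type*} [NormedAddCommGroup F] [InnerProductSpace ℝ F]
  [NormedAddCommGroup G] [InnerProductSpace ℝ G]

section AuxCPWL

variable {E : Type*} [NormedAddCommGroup E] [InnerProductSpace ℝ E] [FiniteDimensional ℝ E]

lemma cpwl_struct (ξ : E → EReal) (h : IsCPWL ξ) :
    (∀ x : E, ξ x ≠ ⊤ → ∃ v, v ∈ subdiff ξ x) ∧
    ∃ D : Set E, IsClosed D ∧ Convex ℝ D ∧ ∀ z, (ξ z ≠ ⊤ ↔ z ∈ D) := by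
  obtain ⟨⟨N, f, bb, hE⟩, hbot, x0, hx0⟩ := h
  have hmem : ∀ (z : E) (r : ℝ), ξ z ≤ (r : EReal) ↔ ∀ i, f i (z, r) ≤ bb i := by
    intro z r
    have := Set.ext_iff.mp hE (z, r)
    simpa using this
  have hval : ∀ z : E, ξ z ≠ ⊤ → ∃ r : ℝ, ξ z = (r : EReal) := fun z hz =>
    ⟨(ξ z).toReal, (EReal.coe_toReal hz (hbot z)).symm⟩
  set G : Fin N → E →ₗ[ℝ] ℝ := fun i => (f i).comp (LinearMap.inl ℝ E ℝ) with hG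
  set c : Fin N → ℝ := fun i => f i (0, 1) with hc
  have hdecomp : ∀ (i : Fin N) (z : E) (r : ℝ), f i (z, r) = G i z + r * c i := by
    intro i z r
    have h1 : ((z, r) : E × ℝ) = ((z, (0:ℝ)) : E × ℝ) + r • (((0 : E), (1:ℝ)) : E × ℝ) := by
      simp [Prod.ext_iff]
    rw [h1, map_add, map_smul, smul_eq_mul]
    simp only [hG, hc, LinearMap.comp_apply, LinearMap.inl_apply]
  obtain ⟨r0, hr0⟩ := hval x0 hx0
  have hcle : ∀ i, c i ≤ 0 := by
    intro i
    by_contra hpos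
    push_neg at hpos
    set T : ℝ := max r0 ((bb i - G i x0 + 1) / c i) with hT
    have h1 : ξ x0 ≤ (T : EReal) := by
      rw [hr0]; exact EReal.coe_le_coe_iff.mpr (le_max_left _ _)
    have h2 := (hmem x0 T).mp h1 i
    rw [hdecomp] at h2
    have h3 : (bb i - G i x0 + 1) / c i ≤ T := le_max_right _ _
    rw [div_le_iff₀ hpos] at h3
    linarith
  have hGcont : ∀ i, Continuous fun z : E => G i z := fun i =>
    (LinearMap.toContinuousLinearMap (G i)).continuous
  constructor
  · -- nonemptiness of the subdifferential on the domain
    intro x hx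
    obtain ⟨r, hr⟩ := hval x hx
    have hxr : ∀ i, G i x + r * c i ≤ bb i := by
      intro i
      have := (hmem x r).mp (le_of_eq hr) i
      rwa [hdecomp] at this
    have hact : ∃ i, c i < 0 ∧ G i x + r * c i = bb i := by
      by_contra hno
      push_neg at hno
      obtain ⟨M, hM⟩ := Finset.exists_le
        ((Finset.univ : Finset (Fin N)).image fun i => (-c i) / (bb i - (G i x + r * c i)))
      have hM1 : (0:ℝ) < max M 1 := lt_of_lt_of_le one_pos (le_max_right _ _)
      set ε : ℝ := 1 / (max M 1) with hε
      have hεpos : 0 < ε := by positivity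
      have hstep : ξ x ≤ ((r - ε : ℝ) : EReal) := by
        rw [hmem]
        intro i
        rw [hdecomp]
        rcases lt_or_eq_of_le (hcle i) with hci | hci
        · have hs : 0 < bb i - (G i x + r * c i) := by
            have hlt := lt_of_le_of_ne (hxr i) (hno i hci)
            linarith
          have hMi : (-c i) / (bb i - (G i x + r * c i)) ≤ M :=
            hM _ (Finset.mem_image_of_mem _ (Finset.mem_univ i))
          rw [div_le_iff₀ hs] at hMi
          have h4 : -c i ≤ (bb i - (G i x + r * c i)) * max M 1 := by
            nlinarith [le_max_left M 1, hs]
          have h6 : ε * (-c i) ≤ bb i - (G i x + r * c i) := by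
            rw [hε, div_mul_eq_mul_div, one_mul, div_le_iff₀ hM1]
            nlinarith
          nlinarith
        · rw [hci, mul_zero, add_zero]
          have h7 := hxr i
          rw [hci, mul_zero, add_zero] at h7
          exact h7
      rw [hr, EReal.coe_le_coe_iff] at hstep
      linarith
    obtain ⟨i0, hci0, hact0⟩ := hact
    set a : E := (InnerProductSpace.toDual ℝ E).symm (LinearMap.toContinuousLinearMap (G i0))
      with ha
    have hinner : ∀ z : E, ⟪a, z⟫ = G i0 z := by
      intro z
      rw [ha, InnerProductSpace.toDual_symm_apply]
      rfl
    refine ⟨(-(c i0))⁻¹ • a, fun z' => ?_⟩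
    by_cases hz' : ξ z' = ⊤
    · rw [hz']; exact le_top
    obtain ⟨rz, hrz⟩ := hval z' hz'
    have hcon := (hmem z' rz).mp (le_of_eq hrz) i0
    rw [hdecomp] at hcon
    rw [hr, hrz, ← EReal.coe_add, EReal.coe_le_coe_iff]
    have hip : ⟪(-(c i0))⁻¹ • a, z' - x⟫ = (-(c i0))⁻¹ * (G i0 z' - G i0 x) := by
      rw [real_inner_smul_left, inner_sub_right, hinner, hinner]
    rw [hip]
    have hcpos : 0 < -(c i0) := by linarith
    have hkey : G i0 z' - G i0 x ≤ (-(c i0)) * (rz - r) := by nlinarith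
    have h2 : (-(c i0))⁻¹ * (G i0 z' - G i0 x) ≤ rz - r := by
      have h3 := mul_le_mul_of_nonneg_left hkey (le_of_lt (inv_pos.mpr hcpos))
      rwa [inv_mul_cancel_left₀ (ne_of_gt hcpos)] at h3
    linarith
  · -- domain is closed and convex
    refine ⟨{z | ∀ i, c i = 0 → G i z ≤ bb i}, ?_, ?_, ?_⟩
    · have hrw : {z : E | ∀ i, c i = 0 → G i z ≤ bb i} =
          ⋂ i, {z | c i = 0 → G i z ≤ bb i} := by
        ext z; simp [Set.mem_iInter]
      rw [hrw]
      refine isClosed_iInter fun i => ?_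
      by_cases hci : c i = 0
      · have : {z : E | c i = 0 → G i z ≤ bb i} = {z : E | G i z ≤ bb i} := by
          ext z; simp [hci]
        rw [this]
        exact isClosed_le (hGcont i) continuous_const
      · have : {z : E | c i = 0 → G i z ≤ bb i} = Set.univ := by
          ext z; simp [hci]
        rw [this]; exact isClosed_univ
    · intro z hz z' hz' p q hp hq hpq i hci
      have h1 := hz i hci
      have h2 := hz' i hci
      simp only [Set.mem_setOf_eq, map_add, map_smul, smul_eq_mul]
      have h3 : p * G i z + q * G i z' ≤ p * bb i + q * bb i :=
        add_le_add (mul_le_mul_of_nonneg_left h1 hp) (mul_le_mul_of_nonneg_left h2 hq)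
      have h4 : p * bb i + q * bb i = bb i := by rw [← add_mul, hpq, one_mul]
      linarith
    · intro z
      constructor
      · intro hz i hci
        obtain ⟨r, hr⟩ := hval z hz
        have := (hmem z r).mp (le_of_eq hr) i
        rw [hdecomp, hci, mul_zero, add_zero] at this
        exact this
      · intro hz
        obtain ⟨M, hM⟩ := Finset.exists_le
          ((Finset.univ : Finset (Fin N)).image fun i => (G i z - bb i) / (-c i))
        have hle : ξ z ≤ ((max M 0 : ℝ) : EReal) := by
          rw [hmem]
          intro i
          rw [hdecomp]
          rcases lt_or_eq_of_le (hcle i) with hci | hci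
          · have hMi : (G i z - bb i) / (-c i) ≤ M :=
              hM _ (Finset.mem_image_of_mem _ (Finset.mem_univ i))
            have hcpos : 0 < -c i := by linarith
            rw [div_le_iff₀ hcpos] at hMi
            nlinarith [mul_le_mul_of_nonneg_right (le_max_left M 0) (le_of_lt hcpos)]
          · rw [hci, mul_zero, add_zero]
            exact hz i hci
        exact ne_top_of_le_ne_top (EReal.coe_ne_top _) hle

end AuxCPWL

set_option maxHeartbeats 2000000 in
/-- Key step of reducibility: if a proper l.s.c. CPWL function `ξ` on
`ℝ^m = ℝ^s × ℝ^{m-s}` has all its subgradients on the open ball `B(yb,α)` with last `m - s`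
components zero, then within this ball `ξ` does not depend on the last `m - s` coordinates:
`ξ(y₁,y₂) = ξ(y₁, yb₂)` whenever both points lie in the ball. -/
theorem cpwl_independent_of_null_components {s t : ℕ} (hs : 1 ≤ s) (ht : 1 ≤ t)
    (ξ : WithLp 2 (Euc s × Euc t) → EReal) (hcpwl : IsCPWL ξ) (hlsc : LowerSemicontinuous ξ)
    (yb : WithLp 2 (Euc s × Euc t)) (α : ℝ) (hα : 0 < α)
    (hsub : ∀ y ∈ Metric.ball yb α, ∀ v ∈ subdiff ξ y,
      ((WithLp.equiv 2 (Euc s × Euc t)) v).2 = 0) :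
    ∀ y ∈ Metric.ball yb α,
      pl2 ((WithLp.equiv 2 (Euc s × Euc t)) y).1 ((WithLp.equiv 2 (Euc s × Euc t)) yb).2 ∈
        Metric.ball yb α →
      ξ y = ξ (pl2 ((WithLp.equiv 2 (Euc s × Euc t)) y).1
        ((WithLp.equiv 2 (Euc s × Euc t)) yb).2) := by
  obtain ⟨hsubne, D, hDclosed, hDconv, hDiff⟩ := cpwl_struct ξ hcpwl
  -- two points of the domain in the ball with the same first component have equal values
  have claim2 : ∀ u w : WithLp 2 (Euc s × Euc t), u ∈ Metric.ball yb α →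
      w ∈ Metric.ball yb α → u.fst = w.fst → ξ u ≠ ⊤ → ξ u ≤ ξ w := by
    intro u w hu hw hfst hut
    obtain ⟨v, hv⟩ := hsubne u hut
    have hv2 : v.snd = 0 := by
      have := hsub u hu v hv
      exact this
    have hvw := hv w
    have hip : ⟪v, w - u⟫ = (0:ℝ) := by
      rw [WithLp.prod_inner_apply]
      change ⟪v.fst, (w - u).fst⟫ + ⟪v.snd, (w - u).snd⟫ = (0:ℝ)
      rw [WithLp.sub_fst, WithLp.sub_snd, hfst, hv2]
      simp
    rwa [hip, EReal.coe_zero, add_zero] at hvw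
  -- if u is in the domain, so is any w in the ball with the same first component
  have claim1 : ∀ u w : WithLp 2 (Euc s × Euc t), u ∈ Metric.ball yb α →
      w ∈ Metric.ball yb α → u.fst = w.fst → ξ u ≠ ⊤ → ξ w ≠ ⊤ := by
    intro u w hu hw hfst hut
    by_contra hwt
    have huD : u ∈ D := (hDiff u).mp hut
    have hwD : w ∉ D := fun h => (hDiff w).mpr h hwt
    set p : ℝ → WithLp 2 (Euc s × Euc t) := fun τ => u + τ • (w - u) with hp
    have hpcont : Continuous p := by
      apply Continuous.add continuous_const
      exact continuous_id.smul continuous_const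
    set S : Set ℝ := Set.Icc 0 1 ∩ p ⁻¹' D with hS
    have hScpt : IsCompact S := isCompact_Icc.inter_right (hDclosed.preimage hpcont)
    have h0S : (0:ℝ) ∈ S := by
      refine ⟨⟨le_refl 0, zero_le_one⟩, ?_⟩
      simp only [Set.mem_preimage, hp, zero_smul, add_zero]
      exact huD
    set b := sSup S with hb
    have hbS : b ∈ S := hScpt.sSup_mem ⟨0, h0S⟩
    have hbAbove : BddAbove S := hScpt.bddAbove
    have hb0 : 0 ≤ b := hbS.1.1
    have hb1 : b < 1 := by
      rcases lt_or_eq_of_le hbS.1.2 with h | h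
      · exact h
      · exfalso
        apply hwD
        have hpb : p b = w := by
          rw [h]
          simp only [hp, one_smul]
          abel
        rw [← hpb]
        exact hbS.2
    have hu' : ‖u - yb‖ < α := by
      have := Metric.mem_ball.mp hu
      rwa [dist_eq_norm] at this
    have hw' : ‖w - yb‖ < α := by
      have := Metric.mem_ball.mp hw
      rwa [dist_eq_norm] at this
    set β := max ‖u - yb‖ ‖w - yb‖ with hβ
    have hβ0 : 0 ≤ β := le_max_of_le_left (norm_nonneg _)
    have hβα : β < α := max_lt hu' hw'
    have hden : (0:ℝ) < 1 + ‖w - u‖ := by positivity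
    set ε := min (1 - b) ((α - β) / (1 + ‖w - u‖)) with hε
    have hεpos : 0 < ε := lt_min (by linarith) (div_pos (by linarith) hden)
    have hε1 : ε ≤ 1 - b := min_le_left _ _
    set q := p (b + ε) with hq
    have hbε1 : b + ε ≤ 1 := by linarith
    have hqD : q ∉ D := by
      intro hqd
      have hmem' : b + ε ∈ S := ⟨⟨by linarith, hbε1⟩, hqd⟩
      have := le_csSup hbAbove hmem'
      rw [← hb] at this
      linarith
    have hqyb : ‖q - yb‖ ≤ β := by
      have hcomb : q - yb = (1 - (b+ε)) • (u - yb) + (b+ε) • (w - yb) := by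
        rw [hq]; simp only [hp]; module
      rw [hcomb]
      have hbε0 : 0 ≤ b + ε := by linarith
      calc ‖(1 - (b+ε)) • (u - yb) + (b+ε) • (w - yb)‖
          ≤ ‖(1 - (b+ε)) • (u - yb)‖ + ‖(b+ε) • (w - yb)‖ := norm_add_le _ _
        _ = (1 - (b+ε)) * ‖u - yb‖ + (b+ε) * ‖w - yb‖ := by
            rw [norm_smul, norm_smul, Real.norm_eq_abs, Real.norm_eq_abs,
              abs_of_nonneg (by linarith), abs_of_nonneg hbε0]
        _ ≤ (1 - (b+ε)) * β + (b+ε) * β := by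
            have h1 : ‖u - yb‖ ≤ β := le_max_left _ _
            have h2 : ‖w - yb‖ ≤ β := le_max_right _ _
            have h3 : 0 ≤ 1 - (b + ε) := by linarith
            nlinarith
        _ = β := by ring
    obtain ⟨π, hπD, hπinf⟩ := exists_norm_eq_iInf_of_complete_convex ⟨u, huD⟩
      hDclosed.isComplete hDconv q
    have hnormal : ∀ z ∈ D, ⟪q - π, z - π⟫ ≤ 0 :=
      (norm_eq_iInf_iff_real_inner_le_zero hDconv hπD).mp hπinf
    have hqpb : q - p b = ε • (w - u) := by
      rw [hq]; simp only [hp]; module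
    have hqπ_le : ‖q - π‖ ≤ ε * ‖w - u‖ := by
      have h1 : ‖q - π‖ ≤ ‖q - p b‖ := by
        rw [hπinf]
        exact ciInf_le ⟨0, by rintro x ⟨z, rfl⟩; exact norm_nonneg _⟩ (⟨p b, hbS.2⟩ : D)
      rw [hqpb, norm_smul, Real.norm_eq_abs, abs_of_pos hεpos] at h1
      exact h1
    have hεsmall : ε * ‖w - u‖ < α - β := by
      have h3 : ε ≤ (α - β) / (1 + ‖w - u‖) := min_le_right _ _
      rw [le_div_iff₀ hden] at h3
      nlinarith [norm_nonneg (w - u), hεpos]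
    have hπball : π ∈ Metric.ball yb α := by
      rw [Metric.mem_ball, dist_eq_norm]
      calc ‖π - yb‖ ≤ ‖π - q‖ + ‖q - yb‖ := by
            have hsp : π - yb = (π - q) + (q - yb) := by abel
            rw [hsp]; exact norm_add_le _ _
        _ ≤ ε * ‖w - u‖ + β := by
            rw [norm_sub_rev]
            exact add_le_add hqπ_le hqyb
        _ < α := by linarith
    have hπt : ξ π ≠ ⊤ := (hDiff π).mpr hπD
    obtain ⟨rπ, hrπ⟩ : ∃ r : ℝ, ξ π = (r : EReal) :=
      ⟨(ξ π).toReal, (EReal.coe_toReal hπt (hcpwl.2.1 π)).symm⟩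
    obtain ⟨v0, hv0⟩ := hsubne π hπt
    have hv1 : (v0 + (q - π)) ∈ subdiff ξ π := by
      intro z'
      by_cases hz' : ξ z' = ⊤
      · rw [hz']; exact le_top
      have hz'D : z' ∈ D := (hDiff z').mp hz'
      have hn := hnormal z' hz'D
      have hle : ⟪v0 + (q - π), z' - π⟫ ≤ ⟪v0, z' - π⟫ := by
        rw [inner_add_left]; linarith
      calc ξ π + ((⟪v0 + (q - π), z' - π⟫ : ℝ) : EReal)
          ≤ ξ π + ((⟪v0, z' - π⟫ : ℝ) : EReal) := by
            rw [hrπ, ← EReal.coe_add, ← EReal.coe_add]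
            exact EReal.coe_le_coe_iff.mpr (by linarith)
        _ ≤ ξ z' := hv0 z'
    have hv02 : v0.snd = 0 := by
      have := hsub π hπball v0 hv0
      exact this
    have hv12 : (v0 + (q - π)).snd = 0 := by
      have := hsub π hπball _ hv1
      exact this
    have hqπ2 : (q - π).snd = 0 := by
      rw [WithLp.add_snd, hv02, zero_add] at hv12
      exact hv12
    have hwu1 : (w - u).fst = 0 := by
      rw [WithLp.sub_fst, ← hfst, sub_self]
    have hsq : ‖q - π‖ ^ 2 ≤ 0 := by
      have h1 : ⟪q - π, q - p b⟫ = (0:ℝ) := by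
        rw [hqpb, real_inner_smul_right, WithLp.prod_inner_apply]
        change ε * (⟪(q - π).fst, (w - u).fst⟫ + ⟪(q - π).snd, (w - u).snd⟫) = (0:ℝ)
        rw [hqπ2, hwu1]
        simp
      have h2 : ⟪q - π, p b - π⟫ ≤ 0 := hnormal _ hbS.2
      have h3 : ⟪q - π, q - π⟫ ≤ 0 := by
        have hsplit : q - π = (q - p b) + (p b - π) := by abel
        nth_rewrite 2 [hsplit]
        rw [inner_add_right]
        linarith
      rwa [real_inner_self_eq_norm_sq] at h3
    have hqπ : q = π := by
      have h0 : ‖q - π‖ = 0 := le_antisymm (by nlinarith [norm_nonneg (q - π)]) (norm_nonneg _)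
      rw [norm_eq_zero, sub_eq_zero] at h0
      exact h0
    exact hqD (hqπ ▸ hπD)
  intro y hy hy2
  set y2 := pl2 ((WithLp.equiv 2 (Euc s × Euc t)) y).1 ((WithLp.equiv 2 (Euc s × Euc t)) yb).2
    with hy2def
  have hfst : y.fst = y2.fst := rfl
  by_cases hyt : ξ y = ⊤
  · by_cases hyt2 : ξ y2 = ⊤
    · rw [hyt, hyt2]
    · exact absurd hyt (claim1 y2 y hy2 hy hfst.symm hyt2)
  · have hy2t := claim1 y y2 hy hy2 hfst hyt
    exact le_antisymm (claim2 y y2 hy hy2 hfst hyt) (claim2 y2 y hy2 hy hfst.symm hy2t)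
end
end

section
/- Let θ be a proper convex piecewise linear function on ℝ^m, let Φ : ℝ^n × ℝ^d → ℝ^m be C²-smooth around (x̄,w̄) with z̄ := Φ(x̄,w̄) ∈ dom θ, and assume the second-order qualification condition S(z̄) ∩ ker ∇_xΦ(x̄,w̄)* = {0}. Then for every q̄ ∈ ℝ^n for which the set M(x̄,w̄,q̄) := {v ∈ ∂θ(z̄) : ∇_xΦ(x̄,w̄)*v = q̄} is nonempty, M(x̄,w̄,q̄) is a singleton. -/
noncomputable section
open Set Filter Topology Metric
open scoped RealInnerProductSpace Pointwise NNReal Classical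

variable {F G : Type*} [NormedAddCommGroup F] [InnerProductSpace ℝ F]
  [NormedAddCommGroup G] [InnerProductSpace ℝ G]

/-- Under the second-order qualification condition
`S(zb) ∩ ker ∇ₓΦ(xb,wb)* = {0}`, the multiplier set
`M(xb,wb,qb) = {v ∈ ∂θ(zb) : ∇ₓΦ(xb,wb)* v = qb}` is a singleton whenever it is nonempty. -/
theorem multiplier_set_singleton_of_soqc {n dd m l p : ℕ} (hl : 0 < l)
    (a : Fin l → Euc m) (α : Fin l → ℝ) (d : Fin p → Euc m) (β : Fin p → ℝ)
    (hdom : (cpwlDom d β).Nonempty)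
    (Φ : Euc n × Euc dd → Euc m) (xb : Euc n) (wb : Euc dd)
    (hΦ : ContDiffAt ℝ 2 Φ (xb, wb)) (hzb : Φ (xb, wb) ∈ cpwlDom d β)
    (hsoqc : (Spar (cpwlFun a α d β) (Φ (xb, wb)) : Set (Euc m)) ∩
        {y | ContinuousLinearMap.adjoint (fderiv ℝ (fun x => Φ (x, wb)) xb) y = 0} = {0}) :
    ∀ qb : Euc n,
      {v ∈ subdiff (cpwlFun a α d β) (Φ (xb, wb)) |
          ContinuousLinearMap.adjoint (fderiv ℝ (fun x => Φ (x, wb)) xb) v = qb}.Nonempty →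
      ∃ vb : Euc m,
        {v ∈ subdiff (cpwlFun a α d β) (Φ (xb, wb)) |
          ContinuousLinearMap.adjoint (fderiv ℝ (fun x => Φ (x, wb)) xb) v = qb} = {vb} := by
  intro qb hne
  obtain ⟨v0, hv0⟩ := hne
  refine ⟨v0, ?_⟩
  ext v
  simp only [Set.mem_setOf_eq, Set.mem_singleton_iff]
  constructor
  · rintro ⟨hv, hAv⟩
    have h1 : v - v0 ∈ Spar (cpwlFun a α d β) (Φ (xb, wb)) := by
      have := AffineSubspace.vsub_mem_direction
        (subset_affineSpan ℝ _ hv) (subset_affineSpan ℝ _ hv0.1)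
      simpa [Spar] using this
    have h2 : ContinuousLinearMap.adjoint (fderiv ℝ (fun x => Φ (x, wb)) xb) (v - v0) = 0 := by
      rw [map_sub, hAv, hv0.2, sub_self]
    have hmem : v - v0 ∈ ((Spar (cpwlFun a α d β) (Φ (xb, wb)) : Set (Euc m)) ∩
        {y | ContinuousLinearMap.adjoint (fderiv ℝ (fun x => Φ (x, wb)) xb) y = 0}) := ⟨h1, h2⟩
    rw [hsoqc] at hmem
    have : v - v0 = 0 := hmem
    exact sub_eq_zero.mp this
    
  · rintro rfl
    exact hv0
end
end

section
/- Let θ be a proper convex piecewise linear function on ℝ^m, let Φ : ℝ^n × ℝ^d → ℝ^m and φ₀ : ℝ^n × ℝ^d → ℝ be C²-smooth around (x̄,w̄) with z̄ := Φ(x̄,w̄) ∈ dom θ. Suppose there exist a proper convex piecewise linear function ϑ : ℝ^s → ℝ ∪ {+∞}, an s×m matrix B, and a neighborhood O of z̄ such that θ(z) = ϑ(Bz) for all z ∈ O. Then x̄ is a fully stable locally optimal solution of the problem P(w̄,v̄): minimize φ₀(x,w̄) + θ(Φ(x,w̄)) − ⟨v̄,x⟩, if and only if x̄ is a fully stable locally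 optimal solution of the reduced problem P_r(w̄,v̄): minimize φ₀(x,w̄) + ϑ(BΦ(x,w̄)) − ⟨v̄,x⟩. -/
noncomputable section
open Set Filter Topology Metric
open scoped RealInnerProductSpace Pointwise NNReal Classical

variable {F G : Type*} [NormedAddCommGroup F] [InnerProductSpace ℝ F]
  [NormedAddCommGroup G] [InnerProductSpace ℝ G]

/-- If two extended-real objectives agree on a neighborhood of `(xb, wb)` (a ball in `x`
times a neighborhood in `w`), full stability of `xb` transfers from one to the other. -/
lemma fullyStableSol_transfer {n d : ℕ} (φ ψ : Euc n → Euc d → EReal)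
    (xb : Euc n) (wb : Euc d) (vb : Euc n)
    (γ' : ℝ) (hγ' : 0 < γ') (W₀ : Set (Euc d)) (hW₀ : W₀ ∈ 𝓝 wb)
    (heq : ∀ x, ‖x - xb‖ ≤ γ' → ∀ w ∈ W₀, φ x w = ψ x w)
    (h : FullyStableSol φ xb wb vb) : FullyStableSol ψ xb wb vb := by
  obtain ⟨γ, hγ, W, hW, V, hV, ⟨σ, ⟨K, hK⟩, hargmin, hσb⟩, ⟨μ, hμlip, hμ⟩⟩ := h
  set γ'' := min γ γ' with hγ''def
  have hγ''pos : 0 < γ'' := lt_min hγ hγ'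
  have hσcont : ContinuousAt σ (wb, vb) :=
    hK.continuousOn.continuousAt (prod_mem_nhds hW hV)
  have hball : Metric.closedBall xb γ'' ∈ 𝓝 xb := Metric.closedBall_mem_nhds _ hγ''pos
  have hT : σ ⁻¹' Metric.closedBall xb γ'' ∈ 𝓝 (wb, vb) := by
    apply hσcont.preimage_mem_nhds
    rw [hσb]; exact hball
  rw [mem_nhds_prod_iff] at hT
  obtain ⟨W', hW', V', hV', hWV'⟩ := hT
  have hγ''γ : γ'' ≤ γ := min_le_left _ _
  have hγ''γ' : γ'' ≤ γ' := min_le_right _ _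
  refine ⟨γ'', hγ''pos, W ∩ W₀ ∩ W', inter_mem (inter_mem hW hW₀) hW', V ∩ V',
    inter_mem hV hV', ⟨σ, ⟨K, hK.mono (Set.prod_mono
      (fun x hx => hx.1.1) (fun x hx => hx.1))⟩, ?_, hσb⟩,
    ⟨μ, ?_, ?_⟩⟩
  · -- argmin claim
    intro w hw v hv
    obtain ⟨⟨hw1, hw0⟩, hw'⟩ := hw
    obtain ⟨hv1, hv'⟩ := hv
    have hσmem : σ (w, v) ∈ argminLoc φ xb γ w v := by
      rw [hargmin w hw1 v hv1]; exact rfl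
    obtain ⟨hσγ, hσtop, hσmin⟩ := hσmem
    have hσnear : ‖σ (w, v) - xb‖ ≤ γ'' := by
      have := hWV' (Set.mk_mem_prod hw' hv')
      simpa [Metric.mem_closedBall, dist_eq_norm] using this
    have hσeq : φ (σ (w, v)) w = ψ (σ (w, v)) w :=
      heq _ (hσnear.trans hγ''γ') w hw0
    ext x
    simp only [Set.mem_singleton_iff]
    constructor
    · rintro ⟨hx1, hx2, hx3⟩
      have hxγ' : ‖x - xb‖ ≤ γ' := hx1.trans hγ''γ'
      have hφψx : φ x w = ψ x w := heq x hxγ' w hw0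
      have hxmem : x ∈ argminLoc φ xb γ w v := by
        refine ⟨hx1.trans hγ''γ, by rw [hφψx]; exact hx2, fun y hy => ?_⟩
        have h1 : ψ x w - ((⟪v, x⟫ : ℝ) : EReal) ≤ ψ (σ (w, v)) w - ((⟪v, σ (w, v)⟫ : ℝ) : EReal) :=
          hx3 _ hσnear
        calc φ x w - ((⟪v, x⟫ : ℝ) : EReal) = ψ x w - ((⟪v, x⟫ : ℝ) : EReal) := by rw [hφψx]
          _ ≤ ψ (σ (w, v)) w - ((⟪v, σ (w, v)⟫ : ℝ) : EReal) := h1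
          _ = φ (σ (w, v)) w - ((⟪v, σ (w, v)⟫ : ℝ) : EReal) := by rw [hσeq]
          _ ≤ φ y w - ((⟪v, y⟫ : ℝ) : EReal) := hσmin y hy
      rw [hargmin w hw1 v hv1] at hxmem
      exact hxmem
    · rintro rfl
      refine ⟨hσnear, by rw [← hσeq]; exact hσtop, fun y hy => ?_⟩
      rw [← hσeq, ← heq y (hy.trans hγ''γ') w hw0]
      exact hσmin y (hy.trans hγ''γ)
  · exact hμlip.imp fun K' hK' => hK'.mono (Set.prod_mono (fun x hx => hx.1.1) (fun x hx => hx.1))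
  · -- inf claim
    intro w hw v hv
    obtain ⟨⟨hw1, hw0⟩, hw'⟩ := hw
    obtain ⟨hv1, hv'⟩ := hv
    have hσmem : σ (w, v) ∈ argminLoc φ xb γ w v := by
      rw [hargmin w hw1 v hv1]; exact rfl
    obtain ⟨hσγ, hσtop, hσmin⟩ := hσmem
    have hσnear : ‖σ (w, v) - xb‖ ≤ γ'' := by
      have := hWV' (Set.mk_mem_prod hw' hv')
      simpa [Metric.mem_closedBall, dist_eq_norm] using this
    have e1 : infLoc ψ xb γ'' w v = infLoc φ xb γ'' w v := by
      unfold infLoc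
      refine iInf_congr fun x => ?_
      by_cases hx : ‖x - xb‖ ≤ γ''
      · rw [heq x (hx.trans hγ''γ') w hw0]
      · simp [hx]
    have e2 : infLoc φ xb γ'' w v = infLoc φ xb γ w v := by
      unfold infLoc
      apply le_antisymm
      · exact le_trans (iInf₂_le (σ (w, v)) hσnear) (le_iInf₂ fun y hy => hσmin y hy)
      · exact le_iInf₂ fun y (hy : ‖y - xb‖ ≤ γ'') => iInf₂_le y (hy.trans hγ''γ)
    rw [e1, e2, hμ w hw1 v hv1]

/-- Full stability in the original composite problem `P(wb,vb)` and in the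
reduced problem `P_r(wb,vb)` are equivalent whenever `θ = ϑ ∘ B` near `zb = Φ(xb,wb)`. -/
theorem fullyStable_iff_fullyStable_reduced {n dd m s : ℕ}
    (θ : Euc m → EReal) (hθ : IsCPWL θ)
    (Φ : Euc n × Euc dd → Euc m) (φ₀ : Euc n × Euc dd → ℝ) (xb : Euc n) (wb : Euc dd)
    (hΦ : ContDiffAt ℝ 2 Φ (xb, wb)) (hφ₀ : ContDiffAt ℝ 2 φ₀ (xb, wb))
    (hzb : θ (Φ (xb, wb)) ≠ ⊤)
    (ϑ : Euc s → EReal) (hϑ : IsCPWL ϑ) (B : Euc m →ₗ[ℝ] Euc s)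
    (O : Set (Euc m)) (hO : O ∈ 𝓝 (Φ (xb, wb))) (hred : ∀ z ∈ O, θ z = ϑ (B z))
    (vb : Euc n) :
    FullyStableSol (fun x w => ((φ₀ (x, w) : ℝ) : EReal) + θ (Φ (x, w))) xb wb vb ↔
    FullyStableSol (fun x w => ((φ₀ (x, w) : ℝ) : EReal) + ϑ (B (Φ (x, w)))) xb wb vb := by
  have hΦc : ContinuousAt Φ (xb, wb) := hΦ.continuousAt
  have hpre : Φ ⁻¹' O ∈ 𝓝 (xb, wb) := hΦc.preimage_mem_nhds hO
  rw [mem_nhds_prod_iff] at hpre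
  obtain ⟨U, hU, W₀, hW₀, hUW⟩ := hpre
  obtain ⟨γ', hγ', hγ'U⟩ := Metric.nhds_basis_closedBall.mem_iff.mp hU
  have heq : ∀ x, ‖x - xb‖ ≤ γ' → ∀ w ∈ W₀,
      ((φ₀ (x, w) : ℝ) : EReal) + θ (Φ (x, w)) = ((φ₀ (x, w) : ℝ) : EReal) + ϑ (B (Φ (x, w))) := by
    intro x hx w hw
    have hxU : x ∈ U := hγ'U (by simpa [Metric.mem_closedBall, dist_eq_norm] using hx)
    have hmem : Φ (x, w) ∈ O := hUW (Set.mk_mem_prod hxU hw)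
    rw [hred _ hmem]
  constructor
  · exact fullyStableSol_transfer _ _ xb wb vb γ' hγ' W₀ hW₀ heq
  · exact fullyStableSol_transfer _ _ xb wb vb γ' hγ' W₀ hW₀
      (fun x hx w hw => (heq x hx w hw).symm)
end
end

section
/- Let θ be a proper convex piecewise linear function on ℝ^m, let Φ : ℝ^n × ℝ^d → ℝ^m and φ₀ : ℝ^n × ℝ^d → ℝ be C²-smooth around (x̄,w̄) with z̄ := Φ(x̄,w̄) ∈ dom θ, and assume the nondegeneracy condition S(z̄) ∩ ker ∇_xΦ(x̄,w̄)* = {0}. Let v̄ ∈ ℝ^n satisfy v̄ ∈ ∇_xφ₀(x̄,w̄) + ∇_xΦ(x̄,w̄)*∂θ(z̄). Then the set of Lagrange multipliers {λ ∈ ∂θ(z̄) : v̄ = ∇_xφ₀(x̄,w̄) + ∇_xΦ(x̄,w̄)*λ} is a singleton. -/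
noncomputable section
open Set Filter Topology Metric
open scoped RealInnerProductSpace Pointwise NNReal Classical

variable {F G : Type*} [NormedAddCommGroup F] [InnerProductSpace ℝ F]
  [NormedAddCommGroup G] [InnerProductSpace ℝ G]

/-- Under the nondegeneracy condition `S(zb) ∩ ker ∇ₓΦ(xb,wb)* = {0}`,
the set of Lagrange multipliers `{λ ∈ ∂θ(zb) : vb = ∇ₓφ₀(xb,wb) + ∇ₓΦ(xb,wb)* λ}`
is a singleton. -/
theorem lagrange_multiplier_unique {n dd m l p : ℕ} (hl : 0 < l)
    (a : Fin l → Euc m) (α : Fin l → ℝ) (d : Fin p → Euc m) (β : Fin p → ℝ)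
    (hdom : (cpwlDom d β).Nonempty)
    (Φ : Euc n × Euc dd → Euc m) (φ₀ : Euc n × Euc dd → ℝ) (xb : Euc n) (wb : Euc dd)
    (hΦ : ContDiffAt ℝ 2 Φ (xb, wb)) (hφ₀ : ContDiffAt ℝ 2 φ₀ (xb, wb))
    (hzb : Φ (xb, wb) ∈ cpwlDom d β)
    (hnd : (Spar (cpwlFun a α d β) (Φ (xb, wb)) : Set (Euc m)) ∩
        {y | ContinuousLinearMap.adjoint (fderiv ℝ (fun x => Φ (x, wb)) xb) y = 0} = {0})
    (vb : Euc n)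
    (hvb : ∃ lam ∈ subdiff (cpwlFun a α d β) (Φ (xb, wb)),
      vb = gradient (fun x => φ₀ (x, wb)) xb +
        ContinuousLinearMap.adjoint (fderiv ℝ (fun x => Φ (x, wb)) xb) lam) :
    ∃ lamb : Euc m,
      {lam ∈ subdiff (cpwlFun a α d β) (Φ (xb, wb)) |
        vb = gradient (fun x => φ₀ (x, wb)) xb +
          ContinuousLinearMap.adjoint (fderiv ℝ (fun x => Φ (x, wb)) xb) lam} = {lamb} := by
  obtain ⟨lamb, hsub, heq⟩ := hvb
  refine ⟨lamb, ?_⟩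
  ext lam
  simp only [Set.mem_setOf_eq, Set.mem_singleton_iff]
  constructor
  · rintro ⟨hsub', heq'⟩
    have hA : ContinuousLinearMap.adjoint (fderiv ℝ (fun x => Φ (x, wb)) xb) (lam - lamb) = 0 := by
      rw [map_sub]
      have := heq.symm.trans heq'
      have h2 := add_left_cancel this
      rw [h2]; abel
    have hS : lam - lamb ∈ Spar (cpwlFun a α d β) (Φ (xb, wb)) := by
      have h1 := subset_affineSpan ℝ (subdiff (cpwlFun a α d β) (Φ (xb, wb))) hsub'
      have h2 := subset_affineSpan ℝ (subdiff (cpwlFun a α d β) (Φ (xb, wb))) hsub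
      exact AffineSubspace.vsub_mem_direction h1 h2
    have : lam - lamb ∈ ((Spar (cpwlFun a α d β) (Φ (xb, wb)) : Set (Euc m)) ∩
        {y | ContinuousLinearMap.adjoint (fderiv ℝ (fun x => Φ (x, wb)) xb) y = 0}) := ⟨hS, hA⟩
    rw [hnd] at this
    have := Set.mem_singleton_iff.mp this
    exact sub_eq_zero.mp this
  · rintro rfl; exact ⟨hsub, heq⟩
end
end

section
/- Let θ be a proper convex piecewise linear function on ℝ^m and (z̄,v̄) ∈ gph ∂θ. Then 0 ∈ ∂²θ(z̄,v̄)(u) for every u ∈ dom ∂²θ(z̄,v̄); that is, whenever there exists some w with (w,−u) ∈ N((z̄,v̄); gph ∂θ), one also has (0,−u) ∈ N((z̄,v̄); gph ∂θ). -/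
noncomputable section
open Set Filter Topology Metric
open scoped RealInnerProductSpace Pointwise NNReal Classical

variable {F G : Type*} [NormedAddCommGroup F] [InnerProductSpace ℝ F]
  [NormedAddCommGroup G] [InnerProductSpace ℝ G]

/-! ### Auxiliary lemmas -/

section Pl2Helpers
variable {F G : Type*} [NormedAddCommGroup F] [InnerProductSpace ℝ F]
  [NormedAddCommGroup G] [InnerProductSpace ℝ G]

lemma pl2_sub (x x' : F) (y y' : G) :
    pl2 x y - pl2 x' y' = pl2 (x - x') (y - y') := rfl

lemma pl2_fst (x : F) (y : G) : ((WithLp.equiv 2 (F × G)) (pl2 x y)).1 = x := rfl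

lemma pl2_snd (x : F) (y : G) : ((WithLp.equiv 2 (F × G)) (pl2 x y)).2 = y := rfl

lemma pl2_eta (q : WithLp 2 (F × G)) :
    pl2 ((WithLp.equiv 2 (F × G)) q).1 ((WithLp.equiv 2 (F × G)) q).2 = q := rfl

lemma pl2_norm_zero_left (y : G) : ‖pl2 (0 : F) y‖ = ‖y‖ := by
  rw [show ‖pl2 (0:F) y‖ = Real.sqrt (‖(0:F)‖ ^ 2 + ‖y‖ ^ 2) from
    WithLp.prod_norm_eq_of_L2 _]
  simp [Real.sqrt_sq, norm_nonneg]

lemma pl2_inner (x x' : F) (y y' : G) :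
    ⟪pl2 x y, pl2 x' y'⟫ = ⟪x, x'⟫ + ⟪y, y'⟫ :=
  WithLp.prod_inner_apply _ _

lemma pl2_fst_norm_le (q : WithLp 2 (F × G)) :
    ‖((WithLp.equiv 2 (F × G)) q).1‖ ≤ ‖q‖ := by
  rw [WithLp.prod_norm_eq_of_L2]
  have h1 : ‖((WithLp.equiv 2 (F × G)) q).1‖ = Real.sqrt (‖q.fst‖ ^ 2) := by
    rw [Real.sqrt_sq (norm_nonneg _)]; rfl
  rw [h1]
  exact Real.sqrt_le_sqrt (le_add_of_nonneg_right (sq_nonneg _))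

lemma pl2_snd_norm_le (q : WithLp 2 (F × G)) :
    ‖((WithLp.equiv 2 (F × G)) q).2‖ ≤ ‖q‖ := by
  rw [WithLp.prod_norm_eq_of_L2]
  have h1 : ‖((WithLp.equiv 2 (F × G)) q).2‖ = Real.sqrt (‖q.snd‖ ^ 2) := by
    rw [Real.sqrt_sq (norm_nonneg _)]; rfl
  rw [h1]
  exact Real.sqrt_le_sqrt (le_add_of_nonneg_left (sq_nonneg _))

end Pl2Helpers
set_option linter.unusedSectionVars false

section CpwlAux
variable {m l p : ℕ} (a : Fin l → Euc m) (α : Fin l → ℝ) (d : Fin p → Euc m) (β : Fin p → ℝ)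

/-- The finite-max part of a CPWL function, as a real-valued function. -/
def fm (z : Euc m) : ℝ := ⨆ i, (⟪a i, z⟫ - α i)

lemma cpwl_eq_fm {z : Euc m} (hz : z ∈ cpwlDom d β) :
    cpwlFun a α d β z = ((fm a α z : ℝ) : EReal) := by
  unfold cpwlFun fm; exact if_pos hz

lemma cpwl_eq_top {z : Euc m} (hz : z ∉ cpwlDom d β) :
    cpwlFun a α d β z = ⊤ := by
  unfold cpwlFun; exact if_neg hz

lemma fm_eq_sup' (hl : 0 < l) (z : Euc m) (H : (Finset.univ : Finset (Fin l)).Nonempty) :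
    fm a α z = Finset.univ.sup' H (fun i => ⟪a i, z⟫ - α i) := by
  haveI : Nonempty (Fin l) := ⟨⟨0, hl⟩⟩
  unfold fm
  refine le_antisymm ?_ ?_
  · exact ciSup_le fun i =>
      Finset.le_sup' (fun i => ⟪a i, z⟫ - α i) (Finset.mem_univ i)
  · exact Finset.sup'_le _ _ fun i _ =>
      le_ciSup (Set.Finite.bddAbove (Set.finite_range (fun i => ⟪a i, z⟫ - α i))) i

lemma mem_dom_of_subdiff (hdom : (cpwlDom d β).Nonempty) {z v : Euc m}
    (hv : v ∈ subdiff (cpwlFun a α d β) z) : z ∈ cpwlDom d β := by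
  obtain ⟨z₀, hz₀⟩ := hdom
  by_contra h
  have h1 := hv z₀
  rw [cpwl_eq_fm a α d β hz₀, cpwl_eq_top a α d β h] at h1
  simp [EReal.top_add_coe] at h1

lemma exists_pos_forall_le {ι : Type*} [Fintype ι] (f : ι → ℝ) (P : ι → Prop)
    (hf : ∀ i, P i → 0 < f i) : ∃ ε : ℝ, 0 < ε ∧ ∀ i, P i → ε ≤ f i := by
  classical
  set s : Finset ℝ := insert 1 ((Finset.univ.filter P).image f) with hs
  have hne : s.Nonempty := Finset.insert_nonempty _ _
  refine ⟨s.min' hne, ?_, ?_⟩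
  · rw [Finset.lt_min'_iff]
    intro b hb
    rcases Finset.mem_insert.mp hb with hb | hb
    · rw [hb]; norm_num
    · obtain ⟨i, hi, rfl⟩ := Finset.mem_image.mp hb
      exact hf i (Finset.mem_filter.mp hi).2
  · intro i hi
    exact Finset.min'_le _ _ (Finset.mem_insert_of_mem
      (Finset.mem_image_of_mem f (Finset.mem_filter.mpr ⟨Finset.mem_univ _, hi⟩)))

lemma loclin (hl : 0 < l) {z : Euc m} (hz : z ∈ cpwlDom d β) :
    ∃ ε > (0:ℝ), ∃ M : Euc m → ℝ,
      (∀ c : ℝ, 0 ≤ c → ∀ h : Euc m, M (c • h) = c * M h) ∧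
      (∀ h : Euc m, ‖h‖ < ε →
        ((z + h ∈ cpwlDom d β ↔ ∀ i, ⟪d i, z⟫ = β i → ⟪d i, h⟫ ≤ 0) ∧
          fm a α (z + h) = fm a α z + M h)) := by
  haveI : Nonempty (Fin l) := ⟨⟨0, hl⟩⟩
  have hU : (Finset.univ : Finset (Fin l)).Nonempty := Finset.univ_nonempty
  set g : Fin l → Euc m → ℝ := fun i y => ⟪a i, y⟫ - α i with hg
  have hfmz : fm a α z = Finset.univ.sup' hU (fun i => g i z) := fm_eq_sup' a α hl z hU
  set K : Finset (Fin l) := Finset.univ.filter (fun i => g i z = fm a α z) with hKdef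
  have hK : K.Nonempty := by
    obtain ⟨i, _, hi⟩ := Finset.exists_mem_eq_sup' hU (fun i => g i z)
    exact ⟨i, Finset.mem_filter.mpr ⟨Finset.mem_univ _, by rw [← hi, ← hfmz]⟩⟩
  set C : ℝ := Finset.univ.sup' hU (fun i => ‖a i‖) with hCdef
  have hC0 : 0 ≤ C :=
    le_trans (norm_nonneg (a hU.choose)) (Finset.le_sup' (fun i => ‖a i‖) (Finset.mem_univ _))
  have hCb : ∀ i : Fin l, ‖a i‖ ≤ C := fun i => Finset.le_sup' (fun i => ‖a i‖) (Finset.mem_univ i)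
  set M : Euc m → ℝ := fun h => K.sup' hK (fun i => ⟪a i, h⟫) with hMdef
  have hMhom : ∀ c : ℝ, 0 ≤ c → ∀ h : Euc m, M (c • h) = c * M h := by
    intro c hc h
    have h1 : M (c • h) = K.sup' hK (fun i => c * ⟪a i, h⟫) := by
      simp only [hMdef, real_inner_smul_right]
    have h2 : c * M h = K.sup' hK ((fun x => c * x) ∘ (fun i => ⟪a i, h⟫)) :=
      Finset.comp_sup'_eq_sup'_comp hK (fun x => c * x)
        (fun x y => by simpa using mul_max_of_nonneg x y hc)
    rw [h1, h2]; rfl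
  -- ε₁ : domain radius
  obtain ⟨ε₁, hε₁pos, hε₁le⟩ := exists_pos_forall_le
    (fun i => (β i - ⟪d i, z⟫) / (‖d i‖ + 1)) (fun i => ⟪d i, z⟫ < β i)
    (fun i hi => div_pos (by linarith) (by positivity))
  -- ε₂ : max-formula radius
  have hglt : ∀ i, i ∉ K → g i z < fm a α z := by
    intro i hiK
    have hle : g i z ≤ fm a α z := by
      rw [hfmz]; exact Finset.le_sup' (fun i => g i z) (Finset.mem_univ i)
    have hne : g i z ≠ fm a α z := by
      intro he; exact hiK (Finset.mem_filter.mpr ⟨Finset.mem_univ _, he⟩)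
    exact lt_of_le_of_ne hle hne
  obtain ⟨ε₂, hε₂pos, hε₂le⟩ := exists_pos_forall_le
    (fun i => (fm a α z - g i z) / (2 * C + 1)) (fun i => i ∉ K)
    (fun i hi => div_pos (by linarith [hglt i hi]) (by linarith))
  refine ⟨min ε₁ ε₂, lt_min hε₁pos hε₂pos, M, hMhom, ?_⟩
  intro h hh
  have hh1 : ‖h‖ < ε₁ := lt_of_lt_of_le hh (min_le_left _ _)
  have hh2 : ‖h‖ < ε₂ := lt_of_lt_of_le hh (min_le_right _ _)
  constructor
  · constructor
    · intro hmem i hieq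
      have h1 := hmem i
      rw [inner_add_right] at h1
      linarith [hieq ▸ h1]
    · intro hcond i
      show ⟪d i, z + h⟫ ≤ β i
      rw [inner_add_right]
      by_cases hi : ⟪d i, z⟫ = β i
      · have := hcond i hi; linarith
      · have hlt : ⟪d i, z⟫ < β i := lt_of_le_of_ne (hz i) hi
        have h1 := hε₁le i hlt
        have h2 : ε₁ * (‖d i‖ + 1) ≤ β i - ⟪d i, z⟫ := by
          rw [← le_div_iff₀ (by positivity : (0:ℝ) < ‖d i‖ + 1)]; exact h1
        have h3 : ⟪d i, h⟫ ≤ ‖d i‖ * ‖h‖ := real_inner_le_norm _ _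
        nlinarith [norm_nonneg (d i), norm_nonneg h]
  · -- fm formula
    have hfmh : fm a α (z + h) = Finset.univ.sup' hU (fun i => g i (z + h)) :=
      fm_eq_sup' a α hl (z + h) hU
    have hgzh : ∀ i, g i (z + h) = g i z + ⟪a i, h⟫ := by
      intro i; simp only [hg, inner_add_right]; ring
    have hib : ∀ i : Fin l, ⟪a i, h⟫ ≤ C * ‖h‖ ∧ -(C * ‖h‖) ≤ ⟪a i, h⟫ := by
      intro i
      have h1 : |⟪a i, h⟫| ≤ ‖a i‖ * ‖h‖ := abs_real_inner_le_norm _ _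
      have h2 : ‖a i‖ * ‖h‖ ≤ C * ‖h‖ :=
        mul_le_mul_of_nonneg_right (hCb i) (norm_nonneg h)
      constructor
      · linarith [(abs_le.mp (le_trans h1 h2)).2]
      · linarith [(abs_le.mp (le_trans h1 h2)).1]
    have hMlb : -(C * ‖h‖) ≤ M h := by
      obtain ⟨i0, hi0⟩ := hK
      exact le_trans (hib i0).2 (Finset.le_sup' (fun i => ⟪a i, h⟫) hi0)
    refine le_antisymm ?_ ?_
    · rw [hfmh]
      apply Finset.sup'_le
      intro i _
      rw [hgzh i]
      by_cases hiK : i ∈ K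
      · have hz' : g i z = fm a α z := (Finset.mem_filter.mp hiK).2
        rw [hz']
        exact add_le_add le_rfl (Finset.le_sup' (fun i => ⟪a i, h⟫) hiK)
      · have h1 := hglt i hiK
        have h2 := hε₂le i hiK
        have h3 : ε₂ * (2 * C + 1) ≤ fm a α z - g i z := by
          rw [← le_div_iff₀ (by linarith : (0:ℝ) < 2 * C + 1)]; exact h2
        have h4 := (hib i).1
        nlinarith [norm_nonneg h]
    · obtain ⟨j, hjK, hjM⟩ := Finset.exists_mem_eq_sup' hK (fun i => ⟪a i, h⟫)
      have hjz : g j z = fm a α z := (Finset.mem_filter.mp hjK).2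
      have hMh : M h = ⟪a j, h⟫ := hjM
      have : fm a α z + M h = g j (z + h) := by
        rw [hgzh j, ← hjz, hMh]
      rw [this, hfmh]
      exact Finset.le_sup' (fun i => g i (z + h)) (Finset.mem_univ j)

lemma subdiff_sub_local (hl : 0 < l) (hdom : (cpwlDom d β).Nonempty) {zk vk : Euc m}
    (hvk : vk ∈ subdiff (cpwlFun a α d β) zk) :
    ∃ ε > (0:ℝ), ∀ z v : Euc m, ‖z - zk‖ < ε → v ∈ subdiff (cpwlFun a α d β) z →
      v ∈ subdiff (cpwlFun a α d β) zk := by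
  have hzk : zk ∈ cpwlDom d β := mem_dom_of_subdiff a α d β hdom hvk
  obtain ⟨ε₀, hε₀, M, hMhom, hloc⟩ := loclin a α d β hl hzk
  refine ⟨ε₀ / 2, by positivity, ?_⟩
  intro z v hzn hv
  have hzdom : z ∈ cpwlDom d β := mem_dom_of_subdiff a α d β hdom hv
  have hz : z = zk + (z - zk) := by abel
  set h : Euc m := z - zk with hh
  have hn1 : ‖h‖ < ε₀ := lt_trans hzn (by linarith)
  have hn2 : ‖(2:ℝ) • h‖ < ε₀ := by
    rw [norm_smul]
    simp only [Real.norm_ofNat]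
    linarith
  obtain ⟨hiff1, hfm1⟩ := hloc h hn1
  obtain ⟨hiff2, hfm2⟩ := hloc ((2:ℝ) • h) hn2
  have hdom2 : zk + (2:ℝ) • h ∈ cpwlDom d β := by
    apply hiff2.mpr
    intro i hi
    have h1 := hiff1.mp (hz ▸ hzdom) i hi
    rw [real_inner_smul_right]
    linarith
  have hM2 : M ((2:ℝ) • h) = 2 * M h := hMhom 2 (by norm_num) h
  have hfmz : fm a α z = fm a α zk + M h := by rw [hz]; exact hfm1
  have hvec : zk + (2:ℝ) • h - z = h := by rw [hz, two_smul]; abel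
  -- key inequality ⟪v, h⟫ ≤ M h
  have hvz' := hv (zk + (2:ℝ) • h)
  rw [cpwl_eq_fm a α d β hzdom, cpwl_eq_fm a α d β hdom2, hfm2, hM2, hfmz, hvec,
    ← EReal.coe_add, EReal.coe_le_coe_iff] at hvz'
  have hkey : ⟪v, h⟫ ≤ M h := by linarith
  -- conclude
  intro z'
  have h2 := hv z'
  rw [cpwl_eq_fm a α d β hzdom, hfmz] at h2
  rw [cpwl_eq_fm a α d β hzk]
  have hsplit : ⟪v, z' - zk⟫ = ⟪v, z' - z⟫ + ⟪v, h⟫ := by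
    rw [← inner_add_right]
    congr 1
    rw [hh]
    abel
  calc ((fm a α zk : ℝ) : EReal) + ((⟪v, z' - zk⟫ : ℝ) : EReal)
      = (((fm a α zk + ⟪v, z' - zk⟫ : ℝ)) : EReal) := by rw [EReal.coe_add]
    _ ≤ (((fm a α zk + M h + ⟪v, z' - z⟫ : ℝ)) : EReal) := by
        rw [EReal.coe_le_coe_iff, hsplit]; linarith
    _ = ((fm a α zk + M h : ℝ) : EReal) + ((⟪v, z' - z⟫ : ℝ) : EReal) := by
        rw [← EReal.coe_add]
    _ ≤ cpwlFun a α d β z' := h2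

lemma subdiff_segment (hdom : (cpwlDom d β).Nonempty) {z v v' : Euc m}
    (hv : v ∈ subdiff (cpwlFun a α d β) z) (hv' : v' ∈ subdiff (cpwlFun a α d β) z)
    {t : ℝ} (ht0 : 0 ≤ t) (ht1 : t ≤ 1) :
    v + t • (v' - v) ∈ subdiff (cpwlFun a α d β) z := by
  have hzdom : z ∈ cpwlDom d β := mem_dom_of_subdiff a α d β hdom hv
  intro z'
  by_cases hz' : z' ∈ cpwlDom d β
  · have h1 := hv z'
    have h2 := hv' z'
    rw [cpwl_eq_fm a α d β hzdom, cpwl_eq_fm a α d β hz'] at h1 h2 ⊢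
    rw [← EReal.coe_add, EReal.coe_le_coe_iff] at h1 h2 ⊢
    have hexp : ⟪v + t • (v' - v), z' - z⟫ = (1 - t) * ⟪v, z' - z⟫ + t * ⟪v', z' - z⟫ := by
      rw [inner_add_left, real_inner_smul_left, inner_sub_left]
      ring
    nlinarith [mul_le_mul_of_nonneg_left h1 (by linarith : (0:ℝ) ≤ 1 - t),
      mul_le_mul_of_nonneg_left h2 ht0]
  · rw [cpwl_eq_top a α d β hz']
    exact le_top

/-- The graph of the subdifferential in the `ℓ²` product. -/
def gphS : Set (WithLp 2 (Euc m × Euc m)) :=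
  {q : WithLp 2 (Euc m × Euc m) |
    ((WithLp.equiv 2 (Euc m × Euc m)) q).2 ∈ subdiff (cpwlFun a α d β)
      ((WithLp.equiv 2 (Euc m × Euc m)) q).1}

lemma mem_gphS {z v : Euc m} :
    pl2 z v ∈ gphS a α d β ↔ v ∈ subdiff (cpwlFun a α d β) z := Iff.rfl

lemma frechet_snd_nonpos (hdom : (cpwlDom d β).Nonempty) {zk vk : Euc m}
    (hvk : vk ∈ subdiff (cpwlFun a α d β) zk) {η : WithLp 2 (Euc m × Euc m)}
    (hη : η ∈ frechetNormal (gphS a α d β) (pl2 zk vk)) :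
    ∀ v' ∈ subdiff (cpwlFun a α d β) zk,
      ⟪((WithLp.equiv 2 (Euc m × Euc m)) η).2, v' - vk⟫ ≤ 0 := by
  intro v' hv'
  by_cases hvv : v' = vk
  · simp [hvv]
  set ξ : Euc m := ((WithLp.equiv 2 (Euc m × Euc m)) η).2 with hξ
  set e : Euc m := v' - vk with he
  have hne : e ≠ 0 := sub_ne_zero.mpr hvv
  have hen : 0 < ‖e‖ := norm_pos_iff.mpr hne
  set c : ℝ := ⟪ξ, e⟫ / ‖e‖ with hc
  suffices hcle : c ≤ 0 by
    have h1 : ⟪ξ, e⟫ = c * ‖e‖ := (div_mul_cancel₀ _ hen.ne').symm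
    rw [h1]
    exact mul_nonpos_iff.mpr (Or.inr ⟨hcle, norm_nonneg e⟩)
  refine le_trans (Filter.le_limsup_of_frequently_le ?_ ?_) hη
  · -- frequently c ≤ quotient
    set qn : ℕ → WithLp 2 (Euc m × Euc m) :=
      fun n => pl2 zk (vk + ((1:ℝ) / (n + 1)) • e) with hqn
    have htpos : ∀ n : ℕ, (0:ℝ) < 1 / (n + 1) := by
      intro n; positivity
    have hsubq : ∀ n : ℕ, qn n - pl2 zk vk = pl2 0 (((1:ℝ) / (n + 1)) • e) := by
      intro n
      rw [hqn, pl2_sub, sub_self, add_sub_cancel_left]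
    have hnq : ∀ n : ℕ, ‖qn n - pl2 zk vk‖ = (1 / (n + 1 : ℝ)) * ‖e‖ := by
      intro n
      rw [hsubq n, pl2_norm_zero_left, norm_smul, Real.norm_eq_abs,
        abs_of_pos (htpos n)]
    have hmem : ∀ n : ℕ, qn n ∈ gphS a α d β := by
      intro n
      rw [hqn, mem_gphS]
      exact subdiff_segment a α d β hdom hvk hv' (le_of_lt (htpos n))
        (by rw [div_le_one (by positivity)]; linarith [Nat.cast_nonneg (α := ℝ) n])
    have htend : Filter.Tendsto qn Filter.atTop (𝓝[gphS a α d β] (pl2 zk vk)) := by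
      rw [tendsto_nhdsWithin_iff]
      constructor
      · rw [tendsto_iff_norm_sub_tendsto_zero]
        have h0 : Filter.Tendsto (fun n : ℕ => (1 / (n + 1 : ℝ)) * ‖e‖)
            Filter.atTop (𝓝 0) := by
          have := tendsto_one_div_add_atTop_nhds_zero_nat.mul_const ‖e‖
          rwa [zero_mul] at this
        exact h0.congr (fun n => (hnq n).symm)
      · exact Filter.Eventually.of_forall hmem
    apply htend.frequently
    apply Filter.Frequently.of_forall
    intro n
    -- c ≤ ⟪η, qn n - pl2 zk vk⟫ / ‖qn n - pl2 zk vk‖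
    rw [hnq n, hsubq n, show η = pl2 ((WithLp.equiv 2 (Euc m × Euc m)) η).1 ξ from rfl,
      pl2_inner, inner_zero_right, real_inner_smul_right, zero_add, hc,
      mul_comm ((1:ℝ) / (n+1)) ‖e‖, ← div_div, mul_div_assoc]
    rw [mul_comm ((1:ℝ) / (n+1)) (⟪ξ, e⟫ / ‖e‖), mul_div_assoc,
      div_self (ne_of_gt (htpos n)), mul_one]
  · -- bounded above
    apply Filter.isBoundedUnder_of
    refine ⟨‖η‖, fun q => ?_⟩
    by_cases hq : q = pl2 zk vk
    · simp [hq, norm_nonneg]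
    · have hpos : 0 < ‖q - pl2 zk vk‖ := by
        rw [norm_pos_iff, sub_ne_zero]; exact hq
      rw [div_le_iff₀ hpos]
      exact real_inner_le_norm _ _

lemma zero_mem_frechet_gph (hl : 0 < l) (hdom : (cpwlDom d β).Nonempty) {zk vk : Euc m}
    (hvk : vk ∈ subdiff (cpwlFun a α d β) zk) {ξ : Euc m}
    (hξ : ∀ v' ∈ subdiff (cpwlFun a α d β) zk, ⟪ξ, v' - vk⟫ ≤ 0) :
    pl2 (0 : Euc m) ξ ∈ frechetNormal (gphS a α d β) (pl2 zk vk) := by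
  obtain ⟨ε, hε, hloc⟩ := subdiff_sub_local a α d β hl hdom hvk
  have hmemΩ : pl2 zk vk ∈ gphS a α d β := (mem_gphS a α d β).mpr hvk
  haveI : (𝓝[gphS a α d β] (pl2 zk vk)).NeBot := nhdsWithin_neBot_of_mem hmemΩ
  simp only [frechetNormal, Set.mem_setOf_eq]
  apply Filter.limsup_le_of_le
  · -- coboundedness from below-boundedness
    apply Filter.IsBoundedUnder.isCoboundedUnder_le (α := ℝ)
    apply Filter.isBoundedUnder_of
    refine ⟨-‖pl2 (0 : Euc m) ξ‖, fun q => ?_⟩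
    show -‖pl2 (0 : Euc m) ξ‖ ≤ _
    by_cases hq : q = pl2 zk vk
    · simp [hq, norm_nonneg]
    · have hpos : 0 < ‖q - pl2 zk vk‖ := by
        rw [norm_pos_iff, sub_ne_zero]; exact hq
      rw [le_div_iff₀ hpos, neg_mul]
      exact neg_le_of_abs_le (abs_real_inner_le_norm _ _)
  · -- eventually the quotient is ≤ 0
    have h1 : ∀ᶠ q in 𝓝[gphS a α d β] (pl2 zk vk), q ∈ Metric.ball (pl2 zk vk) ε :=
      Filter.Eventually.filter_mono nhdsWithin_le_nhds
        (Metric.isOpen_ball.eventually_mem (Metric.mem_ball_self hε))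
    have h2 : ∀ᶠ q in 𝓝[gphS a α d β] (pl2 zk vk), q ∈ gphS a α d β :=
      eventually_mem_nhdsWithin
    filter_upwards [h1, h2] with q hq1 hq2
    apply div_nonpos_of_nonpos_of_nonneg _ (norm_nonneg _)
    have hsub : q - pl2 zk vk =
        pl2 (((WithLp.equiv 2 (Euc m × Euc m)) q).1 - zk)
          (((WithLp.equiv 2 (Euc m × Euc m)) q).2 - vk) := rfl
    rw [hsub, pl2_inner, inner_zero_left, zero_add]
    have hnz : ‖((WithLp.equiv 2 (Euc m × Euc m)) q).1 - zk‖ < ε := by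
      have hb : ‖q - pl2 zk vk‖ < ε := by
        rw [← dist_eq_norm]; exact Metric.mem_ball.mp hq1
      calc ‖((WithLp.equiv 2 (Euc m × Euc m)) q).1 - zk‖
          = ‖((WithLp.equiv 2 (Euc m × Euc m)) (q - pl2 zk vk)).1‖ := rfl
        _ ≤ ‖q - pl2 zk vk‖ := pl2_fst_norm_le _
        _ < ε := hb
    have hvq : ((WithLp.equiv 2 (Euc m × Euc m)) q).2 ∈
        subdiff (cpwlFun a α d β) ((WithLp.equiv 2 (Euc m × Euc m)) q).1 := hq2
    exact hξ _ (hloc _ _ hnz hvq)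
end CpwlAux

/-- For a CPWL function `θ` and `(zb,vb) ∈ gph ∂θ`, one has
`0 ∈ ∂²θ(zb,vb)(u)` for every `u ∈ dom ∂²θ(zb,vb)`. -/
theorem zero_mem_sosd_of_nonempty {m l p : ℕ} (hl : 0 < l)
    (a : Fin l → Euc m) (α : Fin l → ℝ) (d : Fin p → Euc m) (β : Fin p → ℝ)
    (hdom : (cpwlDom d β).Nonempty) (zb : Euc m) (hzb : zb ∈ cpwlDom d β)
    (vb : Euc m) (hvb : vb ∈ subdiff (cpwlFun a α d β) zb) :
    ∀ u : Euc m, (sosd (cpwlFun a α d β) zb vb u).Nonempty →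
      0 ∈ sosd (cpwlFun a α d β) zb vb u := by
  intro u hu
  obtain ⟨w, hw⟩ := hu
  simp only [sosd, Set.mem_setOf_eq] at hw ⊢
  have hgph : {q : WithLp 2 (Euc m × Euc m) |
      ((WithLp.equiv 2 (Euc m × Euc m)) q).2 ∈ subdiff (cpwlFun a α d β)
        ((WithLp.equiv 2 (Euc m × Euc m)) q).1} = gphS a α d β := rfl
  rw [hgph] at hw ⊢
  obtain ⟨xs, vs, hxsΩ, hxslim, hvslim, hfr⟩ := hw
  refine ⟨xs, fun k => pl2 0 ((WithLp.equiv 2 (Euc m × Euc m)) (vs k)).2,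
    hxsΩ, hxslim, ?_, ?_⟩
  · -- convergence of the modified normals
    rw [tendsto_iff_norm_sub_tendsto_zero]
    have hb : Filter.Tendsto (fun k => ‖vs k - pl2 w (-u)‖) Filter.atTop (𝓝 0) :=
      tendsto_iff_norm_sub_tendsto_zero.mp hvslim
    apply squeeze_zero (fun k => norm_nonneg _) _ hb
    intro k
    have h1 : pl2 (0 : Euc m) ((WithLp.equiv 2 (Euc m × Euc m)) (vs k)).2 - pl2 0 (-u) =
        pl2 0 (((WithLp.equiv 2 (Euc m × Euc m)) (vs k)).2 - (-u)) := by
      rw [pl2_sub, sub_self]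
    rw [h1, pl2_norm_zero_left]
    have h2 : ((WithLp.equiv 2 (Euc m × Euc m)) (vs k)).2 - (-u) =
        ((WithLp.equiv 2 (Euc m × Euc m)) (vs k - pl2 w (-u))).2 := rfl
    rw [h2]
    exact pl2_snd_norm_le _
  · -- each modified normal is a Fréchet normal
    intro k
    have hk : ((WithLp.equiv 2 (Euc m × Euc m)) (xs k)).2 ∈
        subdiff (cpwlFun a α d β) ((WithLp.equiv 2 (Euc m × Euc m)) (xs k)).1 := hxsΩ k
    have hfrk : vs k ∈ frechetNormal (gphS a α d β)
        (pl2 ((WithLp.equiv 2 (Euc m × Euc m)) (xs k)).1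
          ((WithLp.equiv 2 (Euc m × Euc m)) (xs k)).2) := by
      rw [pl2_eta]; exact hfr k
    have hnonpos := frechet_snd_nonpos a α d β hdom hk hfrk
    have := zero_mem_frechet_gph a α d β hl hdom hk hnonpos
    rwa [pl2_eta] at this
end
end

section
/- Let θ be a proper convex piecewise linear function on ℝ^m and (z̄,v̄) ∈ gph ∂θ. Then the second-order subdifferential of θ is positive semidefinite in the sense that ⟨q,u⟩ ≥ 0 for every u ∈ ℝ^m and every q ∈ ∂²θ(z̄,v̄)(u). -/
noncomputable section
open Set Filter Topology Metric
open scoped RealInnerProductSpace Pointwise NNReal Classical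

variable {F G : Type*} [NormedAddCommGroup F] [InnerProductSpace ℝ F]
  [NormedAddCommGroup G] [InnerProductSpace ℝ G]

/-! ### Auxiliary lemmas for Statement 18 -/

section Aux18

variable {m l p : ℕ}

/-- The finite max part of a CPWL function. -/
noncomputable def Sfun (a : Fin l → Euc m) (α : Fin l → ℝ) (z : Euc m) : ℝ :=
  ⨆ i, (⟪a i, z⟫ - α i)

lemma le_Sfun (a : Fin l → Euc m) (α : Fin l → ℝ) (z : Euc m) (i : Fin l) :
    ⟪a i, z⟫ - α i ≤ Sfun a α z :=
  le_ciSup (f := fun j => (⟪a j, z⟫ - α j)) (Set.Finite.bddAbove (Set.finite_range _)) i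

lemma Sfun_le (hl : 0 < l) {a : Fin l → Euc m} {α : Fin l → ℝ} {z : Euc m} {c : ℝ}
    (h : ∀ i, ⟪a i, z⟫ - α i ≤ c) : Sfun a α z ≤ c := by
  haveI : Nonempty (Fin l) := ⟨⟨0, hl⟩⟩
  exact ciSup_le h

lemma cpwl_eq (a : Fin l → Euc m) (α : Fin l → ℝ) (d : Fin p → Euc m) (β : Fin p → ℝ)
    {z : Euc m} (hz : z ∈ cpwlDom d β) :
    cpwlFun a α d β z = ((Sfun a α z : ℝ) : EReal) := by
  simp only [cpwlFun, Sfun, if_pos hz]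

lemma cpwl_top (a : Fin l → Euc m) (α : Fin l → ℝ) (d : Fin p → Euc m) (β : Fin p → ℝ)
    {z : Euc m} (hz : z ∉ cpwlDom d β) :
    cpwlFun a α d β z = ⊤ := by
  simp only [cpwlFun, if_neg hz]

lemma subdiff_mem_dom {a : Fin l → Euc m} {α : Fin l → ℝ} {d : Fin p → Euc m} {β : Fin p → ℝ}
    (hdom : (cpwlDom d β).Nonempty) {z v : Euc m}
    (hv : v ∈ subdiff (cpwlFun a α d β) z) : z ∈ cpwlDom d β := by
  by_contra hz
  obtain ⟨z0, hz0⟩ := hdom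
  have h := hv z0
  rw [cpwl_top a α d β hz, cpwl_eq a α d β hz0] at h
  simp [EReal.top_add_coe] at h

lemma subdiff_real_ineq {a : Fin l → Euc m} {α : Fin l → ℝ} {d : Fin p → Euc m} {β : Fin p → ℝ}
    {z v : Euc m} (hz : z ∈ cpwlDom d β)
    (hv : v ∈ subdiff (cpwlFun a α d β) z) {y : Euc m} (hy : y ∈ cpwlDom d β) :
    Sfun a α z + ⟪v, y - z⟫ ≤ Sfun a α y := by
  have h := hv y
  rw [cpwl_eq a α d β hz, cpwl_eq a α d β hy] at h
  rw [show ((Sfun a α z : ℝ) : EReal) + ((⟪v, y - z⟫ : ℝ) : EReal)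
      = ((Sfun a α z + ⟪v, y - z⟫ : ℝ) : EReal) by rw [EReal.coe_add]] at h
  exact_mod_cast h

lemma mem_subdiff_of {a : Fin l → Euc m} {α : Fin l → ℝ} {d : Fin p → Euc m} {β : Fin p → ℝ}
    {z v : Euc m} (hz : z ∈ cpwlDom d β)
    (h : ∀ y ∈ cpwlDom d β, Sfun a α z + ⟪v, y - z⟫ ≤ Sfun a α y) :
    v ∈ subdiff (cpwlFun a α d β) z := by
  intro y
  by_cases hy : y ∈ cpwlDom d β
  · rw [cpwl_eq a α d β hz, cpwl_eq a α d β hy,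
      show ((Sfun a α z : ℝ) : EReal) + ((⟪v, y - z⟫ : ℝ) : EReal)
        = ((Sfun a α z + ⟪v, y - z⟫ : ℝ) : EReal) by rw [EReal.coe_add]]
    exact_mod_cast h y hy
  · rw [cpwl_top a α d β hy]; exact le_top

lemma subdiff_mono {a : Fin l → Euc m} {α : Fin l → ℝ} {d : Fin p → Euc m} {β : Fin p → ℝ}
    (hdom : (cpwlDom d β).Nonempty) {z1 v1 z2 v2 : Euc m}
    (h1 : v1 ∈ subdiff (cpwlFun a α d β) z1) (h2 : v2 ∈ subdiff (cpwlFun a α d β) z2) :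
    0 ≤ ⟪v2 - v1, z2 - z1⟫ := by
  have hz1 := subdiff_mem_dom hdom h1
  have hz2 := subdiff_mem_dom hdom h2
  have A := subdiff_real_ineq hz1 h1 hz2
  have B := subdiff_real_ineq hz2 h2 hz1
  simp only [inner_sub_left, inner_sub_right] at A B ⊢
  linarith

lemma cpwlDom_isClosed (d : Fin p → Euc m) (β : Fin p → ℝ) : IsClosed (cpwlDom d β) := by
  have : cpwlDom d β = ⋂ i, {z : Euc m | ⟪d i, z⟫ ≤ β i} := by
    ext z; simp [cpwlDom]
  rw [this]
  exact isClosed_iInter fun i =>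
    isClosed_le (Continuous.inner continuous_const continuous_id) continuous_const

lemma sq_le_of_sq_le_sq {x y : ℝ} (hx : 0 ≤ x) (hy : 0 ≤ y) (h : x ^ 2 ≤ y ^ 2) : x ≤ y := by
  nlinarith

lemma Sfun_continuous (hl : 0 < l) (a : Fin l → Euc m) (α : Fin l → ℝ) :
    Continuous (Sfun a α) := by
  haveI : Nonempty (Fin l) := ⟨⟨0, hl⟩⟩
  have key : (Sfun a α : Euc m → ℝ) = fun z =>
      Finset.univ.sup' Finset.univ_nonempty (fun i => ⟪a i, z⟫ - α i) := by
    funext z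
    exact (Finset.sup'_univ_eq_ciSup (fun i => (⟪a i, z⟫ - α i))).symm
  rw [key]
  exact Continuous.finset_sup'_apply Finset.univ_nonempty fun i _ =>
    (Continuous.inner continuous_const continuous_id).sub continuous_const

set_option maxHeartbeats 1000000 in
/-- Existence of the proximal point. -/
lemma prox_exists (hl : 0 < l) (a : Fin l → Euc m) (α : Fin l → ℝ) (d : Fin p → Euc m)
    (β : Fin p → ℝ) (hdom : (cpwlDom d β).Nonempty) (s : Euc m) :
    ∃ z', z' ∈ cpwlDom d β ∧ (s - z') ∈ subdiff (cpwlFun a α d β) z' := by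
  classical
  obtain ⟨z0, hz0⟩ := hdom
  set ψ : Euc m → ℝ := fun x => Sfun a α x + ‖x - s‖ ^ 2 / 2 with hψdef
  have hψcont : Continuous ψ :=
    (Sfun_continuous hl a α).add
      (((continuous_id.sub continuous_const).norm.pow 2).div_const 2)
  clear_value ψ
  set i0 : Fin l := ⟨0, hl⟩
  set A : ℝ := ‖a i0‖ with hA
  have hA0 : 0 ≤ A := by rw [hA]; exact norm_nonneg _
  set B : ℝ := A * ‖s‖ + α i0 with hB
  -- lower bound for ψ
  have hlow : ∀ x : Euc m, ‖x - s‖ ^ 2 / 2 - A * ‖x - s‖ - B ≤ ψ x := by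
    intro x
    have h1 : ⟪a i0, x⟫ - α i0 ≤ Sfun a α x := le_Sfun a α x i0
    have h2 : -(A * ‖x‖) ≤ ⟪a i0, x⟫ := by
      have h2a := abs_real_inner_le_norm (a i0) x
      have h2b := neg_abs_le (⟪a i0, x⟫ : ℝ)
      rw [hA]; linarith
    have h3 : ‖x‖ ≤ ‖x - s‖ + ‖s‖ := by
      have h3a := norm_add_le (x - s) s
      have h3b : x - s + s = x := by abel
      rw [h3b] at h3a; exact h3a
    rw [hB, hψdef]
    have h4 : -(A * (‖x - s‖ + ‖s‖)) ≤ ⟪a i0, x⟫ := by nlinarith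
    simp only
    nlinarith
  clear_value A B
  set C : ℝ := |B| + |ψ z0| + 1 with hC
  have hC1 : 1 ≤ C := by
    have := abs_nonneg B; have := abs_nonneg (ψ z0); rw [hC]; linarith
  have hBC : B ≤ |B| := le_abs_self B
  have hMC : ψ z0 ≤ |ψ z0| := le_abs_self (ψ z0)
  have hBMC : B + ψ z0 + 1 ≤ 2 * C := by rw [hC]; linarith
  clear_value C
  set R : ℝ := max (‖z0 - s‖) (2 * A + 2 * C) with hR
  have hz0R : ‖z0 - s‖ ≤ R := by rw [hR]; exact le_max_left _ _
  have hRle : 2 * A + 2 * C ≤ R := by rw [hR]; exact le_max_right _ _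
  clear_value R
  -- compact minimization
  set K : Set (Euc m) := cpwlDom d β ∩ Metric.closedBall s R with hK
  have hKcompact : IsCompact K :=
    (isCompact_closedBall s R).inter_left (cpwlDom_isClosed d β)
  have hz0K : z0 ∈ K := by
    refine ⟨hz0, ?_⟩
    rw [Metric.mem_closedBall, dist_eq_norm]
    exact hz0R
  obtain ⟨z', hz'K, hmin⟩ := hKcompact.exists_isMinOn ⟨z0, hz0K⟩ hψcont.continuousOn
  have hz'dom : z' ∈ cpwlDom d β := hz'K.1
  -- global minimality on the domain
  have hglobal : ∀ x ∈ cpwlDom d β, ψ z' ≤ ψ x := by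
    intro x hx
    by_cases hxR : ‖x - s‖ ≤ R
    · exact hmin ⟨hx, by rwa [Metric.mem_closedBall, dist_eq_norm]⟩
    · push_neg at hxR
      have hz0ψ : ψ z' ≤ ψ z0 := hmin hz0K
      have hlb := hlow x
      have hrR : 2 * A + 2 * C < ‖x - s‖ := lt_of_le_of_lt hRle hxR
      have hr0 : 0 < ‖x - s‖ := by nlinarith
      have h1 : C ≤ ‖x - s‖ / 2 - A := by linarith
      have h2 : ‖x - s‖ * C ≤ ‖x - s‖ * (‖x - s‖ / 2 - A) :=
        mul_le_mul_of_nonneg_left h1 hr0.le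
      have h3 : 2 * C * C ≤ ‖x - s‖ * C := by nlinarith
      have h4 : 2 * C ≤ 2 * C * C := by nlinarith
      have h6 : ‖x - s‖ * (‖x - s‖ / 2 - A) = ‖x - s‖ ^ 2 / 2 - A * ‖x - s‖ := by ring
      linarith
  refine ⟨z', hz'dom, ?_⟩
  apply mem_subdiff_of hz'dom
  intro y hy
  -- use convex combinations toward y
  have hkey : ∀ lam : ℝ, 0 < lam → lam ≤ 1 →
      Sfun a α z' + ⟪s - z', y - z'⟫ ≤ Sfun a α y + lam * ‖y - z'‖ ^ 2 / 2 := by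
    intro lam hlam0 hlam1
    set ylam : Euc m := (1 - lam) • z' + lam • y with hylam
    have hylamdom : ylam ∈ cpwlDom d β := by
      intro i
      have h1 : (⟪d i, ylam⟫ : ℝ) = (1 - lam) * ⟪d i, z'⟫ + lam * ⟪d i, y⟫ := by
        rw [hylam, inner_add_right, real_inner_smul_right, real_inner_smul_right]
      have h2 := hz'dom i
      have h3 := hy i
      rw [h1]; nlinarith
    have hScomb : Sfun a α ylam ≤ (1 - lam) * Sfun a α z' + lam * Sfun a α y := by
      apply Sfun_le hl
      intro i
      have h1 : (⟪a i, ylam⟫ : ℝ) = (1 - lam) * ⟪a i, z'⟫ + lam * ⟪a i, y⟫ := by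
        rw [hylam, inner_add_right, real_inner_smul_right, real_inner_smul_right]
      have h2 := le_Sfun a α z' i
      have h3 := le_Sfun a α y i
      rw [h1]; nlinarith
    have hψle : ψ z' ≤ ψ ylam := hglobal ylam hylamdom
    have hnorm : ‖ylam - s‖ ^ 2
        = ‖z' - s‖ ^ 2 + 2 * lam * ⟪z' - s, y - z'⟫ + lam ^ 2 * ‖y - z'‖ ^ 2 := by
      have h4 : ylam - s = (z' - s) + lam • (y - z') := by
        rw [hylam]; module
      rw [h4, norm_add_sq_real, real_inner_smul_right, norm_smul]
      rw [Real.norm_eq_abs, abs_of_pos hlam0]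
      ring
    have hinner : (⟪z' - s, y - z'⟫ : ℝ) = -⟪s - z', y - z'⟫ := by
      simp only [inner_sub_left]; ring
    clear_value ylam
    rw [hψdef] at hψle
    simp only at hψle
    rw [hnorm, hinner] at hψle
    have hq2 : lam * (Sfun a α z' + ⟪s - z', y - z'⟫)
        ≤ lam * (Sfun a α y + lam * ‖y - z'‖ ^ 2 / 2) := by nlinarith [hψle, hScomb]
    exact le_of_mul_le_mul_left hq2 hlam0
  apply le_of_forall_pos_le_add
  intro ε hε
  set Q : ℝ := ‖y - z'‖ ^ 2 with hQ
  have hQ0 : 0 ≤ Q := by rw [hQ]; positivity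
  set lam : ℝ := min 1 (2 * ε / (Q + 1)) with hlam
  have hlam0 : 0 < lam := by
    rw [hlam]; exact lt_min one_pos (by positivity)
  have hlam1 : lam ≤ 1 := by rw [hlam]; exact min_le_left _ _
  have h1 : lam ≤ 2 * ε / (Q + 1) := by rw [hlam]; exact min_le_right _ _
  clear_value lam
  have h := hkey lam hlam0 hlam1
  clear_value Q
  have hle : lam * Q / 2 ≤ ε := by
    rw [le_div_iff₀ (by positivity : (0:ℝ) < Q + 1)] at h1
    nlinarith
  linarith

set_option maxHeartbeats 1000000 in
/-- The Fréchet-level positive semidefiniteness at an arbitrary graph point. -/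
lemma frechet_psd (hl : 0 < l) (a : Fin l → Euc m) (α : Fin l → ℝ) (d : Fin p → Euc m)
    (β : Fin p → ℝ) (hdom : (cpwlDom d β).Nonempty) (z v : Euc m)
    (hv : v ∈ subdiff (cpwlFun a α d β) z) (n : WithLp 2 (Euc m × Euc m))
    (hn : n ∈ frechetNormal {q : WithLp 2 (Euc m × Euc m) |
        ((WithLp.equiv 2 (Euc m × Euc m)) q).2 ∈ subdiff (cpwlFun a α d β)
          ((WithLp.equiv 2 (Euc m × Euc m)) q).1} (pl2 z v)) :
    0 ≤ ⟪((WithLp.equiv 2 (Euc m × Euc m)) n).1, -((WithLp.equiv 2 (Euc m × Euc m)) n).2⟫ := by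
  classical
  set Ω : Set (WithLp 2 (Euc m × Euc m)) := {q : WithLp 2 (Euc m × Euc m) |
      ((WithLp.equiv 2 (Euc m × Euc m)) q).2 ∈ subdiff (cpwlFun a α d β)
        ((WithLp.equiv 2 (Euc m × Euc m)) q).1} with hΩ
  set x : WithLp 2 (Euc m × Euc m) := pl2 z v with hx
  set w : Euc m := ((WithLp.equiv 2 (Euc m × Euc m)) n).1 with hw
  set u : Euc m := -((WithLp.equiv 2 (Euc m × Euc m)) n).2 with hu
  show 0 ≤ ⟪w, u⟫
  -- it suffices to prove ‖u - w‖ ≤ ‖u + w‖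
  suffices hsuff : ‖u - w‖ ≤ ‖u + w‖ by
    have h1 : ‖u - w‖ ^ 2 ≤ ‖u + w‖ ^ 2 := by
      have := norm_nonneg (u - w); nlinarith
    rw [norm_sub_sq_real, norm_add_sq_real] at h1
    rw [real_inner_comm]
    linarith
  by_cases hd0 : w - u = 0
  · have huw : u = w := by
      have : w = u := by rwa [sub_eq_zero] at hd0
      exact this.symm
    rw [huw, sub_self, norm_zero]
    positivity
  set dd : Euc m := w - u with hdd
  have hddn : 0 < ‖dd‖ := by rw [hdd]; exact norm_pos_iff.mpr hd0
  have hsubrw : u - w = -dd := by rw [hdd]; abel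
  clear_value dd
  rw [hsubrw, norm_neg]
  -- reduce to an approximate inequality
  have hmain : ∀ ε0 : ℝ, 0 < ε0 → ‖dd‖ * ‖dd‖ ≤ ‖u + w‖ * ‖dd‖ + ε0 := by
    intro ε0 hε0
    set ε : ℝ := ε0 / (6 * ‖dd‖ + 6) with hε
    have hεpos : 0 < ε := by rw [hε]; positivity
    have hεbound : 6 * ε * ‖dd‖ ≤ ε0 := by
      have hD : (0:ℝ) < 6 * ‖dd‖ + 6 := by positivity
      have hrw : 6 * (ε0 / (6 * ‖dd‖ + 6)) * ‖dd‖ = ε0 * (6 * ‖dd‖) / (6 * ‖dd‖ + 6) := by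
        ring
      rw [hε, hrw, div_le_iff₀ hD]
      nlinarith [hε0.le, norm_nonneg dd]
    clear_value ε
    -- extract a δ-neighborhood from the Fréchet normal condition
    have hbdd : Filter.IsBoundedUnder (· ≤ ·) (𝓝[Ω] x)
        (fun y => ⟪n, y - x⟫ / ‖y - x‖) := by
      apply Filter.isBoundedUnder_of
      refine ⟨‖n‖, fun y => ?_⟩
      show ⟪n, y - x⟫ / ‖y - x‖ ≤ ‖n‖
      by_cases hyx : ‖y - x‖ = 0
      · rw [hyx, div_zero]; exact norm_nonneg n
      · have hpos : 0 < ‖y - x‖ := lt_of_le_of_ne (norm_nonneg _) (Ne.symm hyx)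
        rw [div_le_iff₀ hpos]
        have h1 := abs_real_inner_le_norm n (y - x)
        have h2 := le_abs_self (⟪n, y - x⟫ : ℝ)
        linarith
    have hev : ∀ᶠ y in 𝓝[Ω] x, ⟪n, y - x⟫ / ‖y - x‖ < ε :=
      Filter.eventually_lt_of_limsup_lt (lt_of_le_of_lt hn hεpos) hbdd
    rw [Filter.eventually_iff, Metric.mem_nhdsWithin_iff] at hev
    obtain ⟨δ, hδ0, hδ⟩ := hev
    -- choose t small
    set t : ℝ := δ / (6 * ‖dd‖ + 1) with ht
    have ht0 : 0 < t := by rw [ht]; positivity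
    have ht3 : 3 * (t * ‖dd‖) < δ := by
      rw [ht, div_mul_eq_mul_div]
      rw [show (3 : ℝ) * (δ * ‖dd‖ / (6 * ‖dd‖ + 1)) = 3 * (δ * ‖dd‖) / (6 * ‖dd‖ + 1) by ring]
      rw [div_lt_iff₀ (by positivity : (0:ℝ) < 6 * ‖dd‖ + 1)]
      nlinarith [hδ0, hddn]
    clear_value t
    -- construct the prox point
    set s : Euc m := z + v + t • dd with hs
    obtain ⟨z', hz'dom, hsub⟩ := prox_exists hl a α d β hdom s
    set v' : Euc m := s - z' with hv'
    set h : Euc m := z' - z with hh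
    set g : Euc m := v' - v with hg
    have hz'sub : v' ∈ subdiff (cpwlFun a α d β) z' := by rw [hv']; exact hsub
    have hsum : h + g = t • dd := by
      rw [hh, hg, hv', hs]; abel
    have hmono0 : 0 ≤ ⟪v' - v, z' - z⟫ := subdiff_mono hdom hv hz'sub
    have hmono : 0 ≤ ⟪g, h⟫ := by rw [hg, hh]; exact hmono0
    clear_value v' h g s
    have hgeq : g = t • dd - h := by
      rw [← hsum]; abel
    have hkey2 : ‖h‖ ^ 2 ≤ t * ⟪dd, h⟫ := by
      rw [hgeq] at hmono
      rw [inner_sub_left, real_inner_smul_left, real_inner_self_eq_norm_sq] at hmono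
      linarith
    have hhn : ‖h‖ ≤ t * ‖dd‖ := by
      have h1 : (⟪dd, h⟫ : ℝ) ≤ ‖dd‖ * ‖h‖ := real_inner_le_norm dd h
      nlinarith [norm_nonneg h, mul_pos ht0 hddn]
    have hgn : ‖g‖ ≤ 2 * (t * ‖dd‖) := by
      calc ‖g‖ ≤ ‖t • dd‖ + ‖h‖ := by rw [hgeq]; exact norm_sub_le _ _
      _ ≤ 2 * (t * ‖dd‖) := by
          rw [norm_smul, Real.norm_eq_abs, abs_of_pos ht0]; linarith
    have hhgn : ‖h - g‖ ≤ t * ‖dd‖ := by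
      have h1 : h - g = (h + h) - t • dd := by rw [hgeq]; abel
      have e1 : ‖h + h‖ ^ 2 = 4 * ‖h‖ ^ 2 := by
        rw [norm_add_sq_real, real_inner_self_eq_norm_sq]; ring
      have e2 : (⟪h + h, t • dd⟫ : ℝ) = 2 * (t * ⟪h, dd⟫) := by
        rw [inner_add_left, real_inner_smul_right]; ring
      have e3 : ‖t • dd‖ = t * ‖dd‖ := by
        rw [norm_smul, Real.norm_eq_abs, abs_of_pos ht0]
      have h2 : ‖h - g‖ ^ 2 ≤ (t * ‖dd‖) ^ 2 := by
        rw [h1, norm_sub_sq_real, e1, e2, e3]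
        have hc := real_inner_comm h dd
        nlinarith [hkey2]
      exact sq_le_of_sq_le_sq (norm_nonneg _) (by positivity) h2
    -- the graph point
    set y : WithLp 2 (Euc m × Euc m) := pl2 z' v' with hy
    have hyΩ : y ∈ Ω := by
      rw [hΩ, hy]
      simp only [Set.mem_setOf_eq, pl2, Equiv.apply_symm_apply]
      exact hz'sub
    have hyx1 : ((WithLp.equiv 2 (Euc m × Euc m)) (y - x)) = (h, g) := by
      rw [hy, hx, WithLp.equiv_apply, WithLp.ofLp_sub]
      simp only [pl2, WithLp.equiv_symm_apply, WithLp.ofLp_toLp, Prod.mk_sub_mk]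
      rw [hh, hg, hv']
    clear_value y x
    have e1 : (y - x).fst = h := by rw [← WithLp.ofLp_fst]; exact congrArg Prod.fst hyx1
    have e2 : (y - x).snd = g := by rw [← WithLp.ofLp_snd]; exact congrArg Prod.snd hyx1
    have hyxnorm : ‖y - x‖ ≤ 3 * (t * ‖dd‖) := by
      have h1 : ‖y - x‖ ^ 2 = ‖h‖ ^ 2 + ‖g‖ ^ 2 := by
        rw [← real_inner_self_eq_norm_sq, WithLp.prod_inner_apply, WithLp.ofLp_fst, WithLp.ofLp_snd, e1, e2,
          real_inner_self_eq_norm_sq, real_inner_self_eq_norm_sq]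
      apply sq_le_of_sq_le_sq (norm_nonneg _) (by positivity)
      rw [h1]
      nlinarith [norm_nonneg h, norm_nonneg g, mul_pos ht0 hddn]
    have hyxδ : dist y x < δ := by
      rw [dist_eq_norm]
      exact lt_of_le_of_lt hyxnorm ht3
    -- apply the Fréchet estimate
    have hfe : ⟪n, y - x⟫ ≤ ε * (3 * (t * ‖dd‖)) := by
      by_cases hyx0 : ‖y - x‖ = 0
      · have hz : y - x = 0 := norm_eq_zero.mp hyx0
        rw [hz, inner_zero_right]
        positivity
      · have hpos : 0 < ‖y - x‖ := lt_of_le_of_ne (norm_nonneg _) (Ne.symm hyx0)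
        have hmem : y ∈ Metric.ball x δ ∩ Ω := ⟨by rwa [Metric.mem_ball], hyΩ⟩
        have h1 := hδ hmem
        simp only [Set.mem_setOf_eq] at h1
        rw [div_lt_iff₀ hpos] at h1
        calc (⟪n, y - x⟫ : ℝ) ≤ ε * ‖y - x‖ := le_of_lt h1
        _ ≤ ε * (3 * (t * ‖dd‖)) := mul_le_mul_of_nonneg_left hyxnorm hεpos.le
    have hinner : (⟪n, y - x⟫ : ℝ) = ⟪w, h⟫ - ⟪u, g⟫ := by
      rw [WithLp.prod_inner_apply]; simp only [WithLp.ofLp_fst, WithLp.ofLp_snd]; rw [e1, e2]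
      have e3 : n.fst = w := by rw [hw]; rfl
      have e4 : n.snd = -u := by rw [hu, neg_neg]; rfl
      rw [e3, e4, inner_neg_left]
      ring
    -- the algebraic identity and conclusion
    have hid : (⟪u + w, h - g⟫ : ℝ)
        = ⟪u - w, h + g⟫ + 2 * (⟪w, h⟫ - ⟪u, g⟫) := by
      simp only [inner_add_left, inner_sub_left, inner_add_right, inner_sub_right]
      ring
    have hval : (⟪u - w, h + g⟫ : ℝ) = -(t * (‖dd‖ * ‖dd‖)) := by
      rw [hsum, real_inner_smul_right, hsubrw, inner_neg_left,
        real_inner_self_eq_norm_sq]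
      ring
    have hlow2 : -(‖u + w‖ * (t * ‖dd‖)) ≤ ⟪u + w, h - g⟫ := by
      have h1 := abs_real_inner_le_norm (u + w) (h - g)
      have h2 := neg_abs_le (⟪u + w, h - g⟫ : ℝ)
      have h3 : ‖u + w‖ * ‖h - g‖ ≤ ‖u + w‖ * (t * ‖dd‖) :=
        mul_le_mul_of_nonneg_left hhgn (norm_nonneg _)
      linarith
    have hfinal : t * (‖dd‖ * ‖dd‖) ≤ ‖u + w‖ * (t * ‖dd‖) + 6 * ε * (t * ‖dd‖) := by
      rw [hid, hval] at hlow2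
      rw [hinner] at hfe
      linarith
    have hq : t * (‖dd‖ * ‖dd‖) ≤ t * (‖u + w‖ * ‖dd‖ + ε0) := by
      nlinarith [hfinal, hεbound, ht0.le]
    exact le_of_mul_le_mul_left hq ht0
  have h1 : ‖dd‖ * ‖dd‖ ≤ ‖u + w‖ * ‖dd‖ := le_of_forall_pos_le_add hmain
  exact le_of_mul_le_mul_right h1 hddn

end Aux18

/-- Positive semidefiniteness of the second-order subdifferential of a
CPWL (convex) function: `⟨q,u⟩ ≥ 0` whenever `q ∈ ∂²θ(zb,vb)(u)`. -/
theorem sosd_cpwl_pos_semidefinite {m l p : ℕ} (hl : 0 < l)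
    (a : Fin l → Euc m) (α : Fin l → ℝ) (d : Fin p → Euc m) (β : Fin p → ℝ)
    (hdom : (cpwlDom d β).Nonempty) (zb : Euc m) (hzb : zb ∈ cpwlDom d β)
    (vb : Euc m) (hvb : vb ∈ subdiff (cpwlFun a α d β) zb) :
    ∀ u : Euc m, ∀ q ∈ sosd (cpwlFun a α d β) zb vb u, 0 ≤ ⟪q, u⟫ := by
  intro u q hq
  obtain ⟨xs, vs, hxs, hxstend, hvstend, hfn⟩ := hq
  set L := WithLp.prodContinuousLinearEquiv 2 ℝ (Euc m) (Euc m) with hL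
  have hLapp : ∀ y : WithLp 2 (Euc m × Euc m), L y = (WithLp.equiv 2 (Euc m × Euc m)) y :=
    fun y => rfl
  set T : WithLp 2 (Euc m × Euc m) → ℝ :=
    fun y => ⟪((WithLp.equiv 2 (Euc m × Euc m)) y).1, -((WithLp.equiv 2 (Euc m × Euc m)) y).2⟫
    with hT
  have hTcont : Continuous T := by
    have h1 : Continuous fun y : WithLp 2 (Euc m × Euc m) =>
        ((WithLp.equiv 2 (Euc m × Euc m)) y).1 := by
      simp only [← hLapp]; exact continuous_fst.comp L.continuous
    have h2 : Continuous fun y : WithLp 2 (Euc m × Euc m) =>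
        -((WithLp.equiv 2 (Euc m × Euc m)) y).2 := by
      simp only [← hLapp]; exact (continuous_snd.comp L.continuous).neg
    exact Continuous.inner h1 h2
  have hk : ∀ k, 0 ≤ T (vs k) := by
    intro k
    have hmem : ((WithLp.equiv 2 (Euc m × Euc m)) (xs k)).2 ∈
        subdiff (cpwlFun a α d β) ((WithLp.equiv 2 (Euc m × Euc m)) (xs k)).1 := hxs k
    have hbase : pl2 ((WithLp.equiv 2 (Euc m × Euc m)) (xs k)).1
        ((WithLp.equiv 2 (Euc m × Euc m)) (xs k)).2 = xs k := by
      simp only [pl2]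
      rw [show (((WithLp.equiv 2 (Euc m × Euc m)) (xs k)).1,
          ((WithLp.equiv 2 (Euc m × Euc m)) (xs k)).2) = (WithLp.equiv 2 (Euc m × Euc m)) (xs k)
          from rfl]
      exact (WithLp.equiv 2 (Euc m × Euc m)).symm_apply_apply (xs k)
    have hn := hfn k
    rw [← hbase] at hn
    exact frechet_psd hl a α d β hdom _ _ hmem (vs k) hn
  have htend : Filter.Tendsto (fun k => T (vs k)) Filter.atTop (𝓝 (T (pl2 q (-u)))) :=
    (hTcont.tendsto _).comp hvstend
  have hval : T (pl2 q (-u)) = ⟪q, u⟫ := by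
    simp only [hT, pl2, Equiv.apply_symm_apply, neg_neg]
  rw [← hval]
  exact ge_of_tendsto' htend hk
end
end
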